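/- arXiv:1806.07404 — 5 statements merged into one kernel-verified Lean document; each statement's English description precedes it below -/
import Mathlib

section
/- There exists an absolute constant c > 0 with the following property. Let 0 < δ < 1, let 0 < ε < 1, let n ≥ 1, and let p(z) = a_0 + a_1 z + ... + a_n z^n and q(z) = b_0 + b_1 z + ... + b_n z^n be nonzero complex polynomials of degree at most n such that every root z of p and every root z of q satisfies Re z ≤ -δ. If a_k = b_k for every integer k with 0 ≤ k ≤ (c/δ)·ln(n/(εδ)), then there exists w ∈ ℂ with e^w = p(1)/q(1) and |w| ≤ ε. -/
open Polynomial Complex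


lemma exp_msum (m : Multiset ℂ) : Complex.exp m.sum = (m.map Complex.exp).prod := by
  induction m using Multiset.induction_on with
  | empty => simp
  | cons a s ih => simp [Complex.exp_add, ih]

lemma hasDerivAt_msum (m : Multiset ℂ) (f : ℂ → ℂ → ℂ) (g : ℂ → ℂ) (z : ℂ)
    (h : ∀ r ∈ m, HasDerivAt (f r) (g r) z) :
    HasDerivAt (fun w => (m.map (fun r => f r w)).sum) ((m.map g).sum) z := by
  induction m using Multiset.induction_on with
  | empty => simpa using hasDerivAt_const z (0:ℂ)
  | cons a s ih =>
      simp only [Multiset.map_cons, Multiset.sum_cons]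
      exact ((h a (Multiset.mem_cons_self a s)).add
        (ih (fun r hr => h r (Multiset.mem_cons_of_mem hr))))

noncomputable def Pl (p : Polynomial ℂ) (z : ℂ) : ℂ :=
  (p.roots.map (fun r => Complex.log (z - r) - Complex.log (-r))).sum

noncomputable def Sl (p : Polynomial ℂ) (z : ℂ) : ℂ :=
  (p.roots.map (fun r => (z - r)⁻¹)).sum

section
variable {δ : ℝ} {p : Polynomial ℂ} {z : ℂ}

lemma re_pos_of_root (hroot : ∀ r ∈ p.roots, r.re ≤ -δ) (hz : -δ/2 < z.re) (hδ : 0 < δ)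
    {r : ℂ} (hr : r ∈ p.roots) : δ/2 < (z - r).re := by
  have := hroot r hr; simp only [Complex.sub_re]; linarith

lemma hd_Pl (hδ : 0 < δ) (hroot : ∀ r ∈ p.roots, r.re ≤ -δ) (hz : -δ/2 < z.re) :
    HasDerivAt (Pl p) (Sl p z) z := by
  apply hasDerivAt_msum
  intro r hr
  have h1 : (0:ℝ) < (z - r).re := by
    have := re_pos_of_root hroot hz hδ hr; linarith
  have hd : HasDerivAt (fun w => Complex.log (w - r)) ((z - r)⁻¹) z := by
    have := (Complex.hasDerivAt_log (Or.inl h1)).comp z ((hasDerivAt_id z).sub_const r)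
    simpa [Function.comp_def] using this
  simpa using hd.sub_const (Complex.log (-r))

lemma exp_Pl (hδ : 0 < δ) (hroot : ∀ r ∈ p.roots, r.re ≤ -δ) (hz : -δ/2 < z.re) :
    Complex.exp (Pl p z) * p.eval 0 = p.eval z := by
  have hsplit := Polynomial.Splits.eq_prod_roots (IsAlgClosed.splits p)
  have hev : ∀ w : ℂ, p.eval w = p.leadingCoeff * (p.roots.map (fun r => w - r)).prod := by
    intro w
    conv_lhs => rw [hsplit]
    simp [Polynomial.eval_multiset_prod, Multiset.map_map, Function.comp]
  have hexp : Complex.exp (Pl p z)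
      = (p.roots.map (fun r => (z - r) * (-r)⁻¹)).prod := by
    rw [Pl, exp_msum, Multiset.map_map]
    congr 1
    apply Multiset.map_congr rfl
    intro r hr
    have h1 : (0:ℝ) < (z - r).re := by
      have := re_pos_of_root hroot hz hδ hr; linarith
    have h2 : (-r).re > 0 := by
      have := hroot r hr; simp [Complex.neg_re]; linarith
    have hz1 : z - r ≠ 0 := by
      intro h; rw [h] at h1; simp at h1
    have hz2 : (-r) ≠ 0 := by
      intro h; rw [h] at h2; simp at h2
    simp [Function.comp, Complex.exp_sub, Complex.exp_log hz1, Complex.exp_log hz2, div_eq_mul_inv]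
  have hprodne : (p.roots.map (fun r => (0:ℂ) - r)).prod ≠ 0 := by
    apply Multiset.prod_ne_zero
    simp only [Multiset.mem_map]
    rintro ⟨r, hr, hr0⟩
    have := hroot r hr
    apply_fun Complex.re at hr0
    simp [Complex.sub_re] at hr0
    linarith
  rw [hexp, hev z, hev 0]
  have : (p.roots.map (fun r => (z - r) * (-r)⁻¹)).prod
      = (p.roots.map (fun r => z - r)).prod * ((p.roots.map (fun r => (0:ℂ) - r)).prod)⁻¹ := by
    rw [← Multiset.prod_map_inv, ← Multiset.prod_map_mul]
    congr 1
    apply Multiset.map_congr rfl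
    intro r _
    simp
  rw [this]
  set A := (p.roots.map (fun r => z - r)).prod with hA
  set Bb := (p.roots.map (fun r => (0:ℂ) - r)).prod with hB
  field_simp

lemma Sl_bound (hδ : 0 < δ) (hroot : ∀ r ∈ p.roots, r.re ≤ -δ) (hz : -δ/2 < z.re) :
    ‖Sl p z‖ ≤ (Multiset.card p.roots) * (2/δ) := by
  refine (norm_multiset_sum_le _).trans ?_
  rw [Multiset.map_map]
  have : ∀ x ∈ p.roots.map (fun r => ‖(z - r)⁻¹‖), x ≤ 2/δ := by
    simp only [Multiset.mem_map, Function.comp, forall_exists_index, and_imp]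
    rintro x r hr rfl
    have h1 := re_pos_of_root hroot hz hδ hr
    have h2 : δ/2 ≤ ‖z - r‖ := le_trans h1.le (Complex.re_le_norm _)
    rw [norm_inv]
    have h3 : (0:ℝ) < δ/2 := by positivity
    calc (‖z - r‖)⁻¹ ≤ (δ/2)⁻¹ := by
          exact inv_anti₀ h3 h2
      _ = 2/δ := by rw [inv_div]
  have := Multiset.sum_le_card_nsmul _ _ this
  simpa [Multiset.map_map] using this

lemma dvd_wronskian (p q : ℂ[X]) (K : ℕ) (h : ∀ k ≤ K, p.coeff k = q.coeff k) :
    (X : ℂ[X])^K ∣ (derivative p * q - p * derivative q) := by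
  have he : (X : ℂ[X])^(K+1) ∣ (p - q) := by
    rw [Polynomial.X_pow_dvd_iff]
    intro d hd
    rw [Polynomial.coeff_sub, h d (Nat.lt_succ_iff.mp hd), sub_self]
  obtain ⟨g, hg⟩ := he
  have hp : p = q + X^(K+1) * g := by rw [← hg]; ring
  have hder : derivative p * q - p * derivative q
      = derivative (X^(K+1) * g) * q - (X^(K+1) * g) * derivative q := by
    rw [hp]; rw [derivative_add]; ring
  rw [hder]
  have h1 : (X : ℂ[X])^K ∣ derivative (X^(K+1) * g) := by
    rw [derivative_mul, derivative_X_pow]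
    apply dvd_add
    · exact Dvd.dvd.mul_right (Dvd.dvd.mul_left (dvd_refl _) _) _
    · exact Dvd.dvd.mul_right (pow_dvd_pow _ (Nat.le_succ K)) _
  have h2 : (X : ℂ[X])^K ∣ (X^(K+1) * g) :=
    Dvd.dvd.mul_right (pow_dvd_pow _ (by omega)) _
  exact dvd_sub (h1.mul_right _) (h2.mul_right _)

end

section Main

variable {δ ε : ℝ} {n K : ℕ} {p q : ℂ[X]}

/-- The Möbius map from the unit disk onto `{Re > -δ/2}`. -/
noncomputable def psi (δ : ℝ) (u : ℂ) : ℂ := δ * u / (1 - u)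

lemma psi_mem (hδ0 : 0 < δ) {u : ℂ} (hu : ‖u‖ < 1) : -δ/2 < (psi δ u).re := by
  have h1u : (1 : ℂ) - u ≠ 0 := by
    intro h
    have : (1:ℂ) = u := by linear_combination h
    rw [← this] at hu; simp at hu
  have h1upos : 0 < ‖(1:ℂ) - u‖ := norm_pos_iff.mpr h1u
  have key : ‖psi δ u‖ < ‖psi δ u + δ‖ := by
    have hplus : psi δ u + (δ:ℂ) = (δ:ℂ) / (1 - u) := by
      rw [psi]; field_simp; ring
    rw [hplus, psi, norm_div, norm_div, norm_mul]
    rw [div_lt_div_iff₀ h1upos h1upos]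
    have hδn : ‖(δ:ℂ)‖ = δ := by
      rw [Complex.norm_real, Real.norm_eq_abs, abs_of_pos hδ0]
    rw [hδn]
    nlinarith [mul_pos hδ0 h1upos, hu]
  set w := psi δ u with hw
  have h2 : ‖w‖^2 < ‖w + δ‖^2 := by
    have := norm_nonneg w
    nlinarith [key]
  rw [Complex.sq_norm, Complex.sq_norm,
    Complex.normSq_apply, Complex.normSq_apply] at h2
  simp only [Complex.add_re, Complex.add_im, Complex.ofReal_re, Complex.ofReal_im, add_zero] at h2
  nlinarith [h2]

end Main

lemma one_sub_ne {u : ℂ} (hu : ‖u‖ < 1) : (1 : ℂ) - u ≠ 0 := by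
  intro h
  have : (1:ℂ) = u := by linear_combination h
  rw [← this] at hu; simp at hu

set_option maxHeartbeats 1000000 in
theorem main_analytic {δ ε : ℝ} {n K : ℕ} {p q : Polynomial ℂ}
    (hδ0 : 0 < δ) (hδ1 : δ < 1) (hε0 : 0 < ε)
    (hn : 1 ≤ n) (hp : p ≠ 0) (hq : q ≠ 0) (hpd : p.natDegree ≤ n) (hqd : q.natDegree ≤ n)
    (hproot : ∀ z : ℂ, p.eval z = 0 → z.re ≤ -δ)
    (hqroot : ∀ z : ℂ, q.eval z = 0 → z.re ≤ -δ)
    (hcoeff : ∀ k ≤ K, p.coeff k = q.coeff k)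
    (hK : 4/δ * Real.log (4*n/(ε*δ)) ≤ K) :
    ∃ w : ℂ, Complex.exp w = p.eval 1 / q.eval 1 ∧ ‖w‖ ≤ ε := by
  have hpr : ∀ r ∈ p.roots, r.re ≤ -δ := fun r hr =>
    hproot r ((Polynomial.mem_roots hp).mp hr)
  have hqr : ∀ r ∈ q.roots, r.re ≤ -δ := fun r hr =>
    hqroot r ((Polynomial.mem_roots hq).mp hr)
  have hpne : ∀ z : ℂ, -δ/2 < z.re → p.eval z ≠ 0 := by
    intro z hz h; have := hproot z h; linarith
  have hqne : ∀ z : ℂ, -δ/2 < z.re → q.eval z ≠ 0 := by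
    intro z hz h; have := hqroot z h; linarith
  have h00 : p.eval 0 = q.eval 0 := by
    rw [← Polynomial.coeff_zero_eq_eval_zero, ← Polynomial.coeff_zero_eq_eval_zero]
    exact hcoeff 0 (Nat.zero_le K)
  set F : ℂ → ℂ := fun z => Pl p z - Pl q z with hF
  set S : ℂ → ℂ := fun z => Sl p z - Sl q z with hS
  have hFd : ∀ z : ℂ, -δ/2 < z.re → HasDerivAt F (S z) z := fun z hz =>
    (hd_Pl hδ0 hpr hz).sub (hd_Pl hδ0 hqr hz)
  have hFexp : ∀ z : ℂ, -δ/2 < z.re → Complex.exp (F z) * q.eval z = p.eval z := by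
    intro z hz
    have e1 := exp_Pl hδ0 hpr hz
    have e2 := exp_Pl hδ0 hqr hz
    have hqz : Complex.exp (Pl q z) ≠ 0 := Complex.exp_ne_zero _
    show Complex.exp (Pl p z - Pl q z) * q.eval z = p.eval z
    rw [Complex.exp_sub, div_mul_eq_mul_div, div_eq_iff hqz]
    linear_combination (-(Complex.exp (Pl p z))) * e2 + (Complex.exp (Pl q z)) * e1
      - (Complex.exp (Pl p z) * Complex.exp (Pl q z)) * h00
  obtain ⟨d, hd⟩ : ∃ d, Polynomial.derivative p * q - p * Polynomial.derivative q
      = (Polynomial.X)^K * d := dvd_wronskian p q K hcoeff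
  have hSid : ∀ z : ℂ, -δ/2 < z.re →
      S z * (p.eval z * q.eval z) = z^K * d.eval z := by
    intro z hz
    have h1 : HasDerivAt (fun w => Complex.exp (F w)) (Complex.exp (F z) * S z) z := by
      have := (Complex.hasDerivAt_exp (F z)).comp z (hFd z hz)
      simpa [Function.comp_def] using this
    have h2 := Polynomial.hasDerivAt q z
    have hEq : HasDerivAt (fun w => Complex.exp (F w) * Polynomial.eval w q)
        (Complex.exp (F z) * S z * Polynomial.eval z q
          + Complex.exp (F z) * Polynomial.eval z (Polynomial.derivative q)) z := h1.mul h2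
    have hopen : IsOpen {w : ℂ | -δ/2 < w.re} := isOpen_lt continuous_const Complex.continuous_re
    have heq : (fun w => Polynomial.eval w p)
        =ᶠ[nhds z] (fun w => Complex.exp (F w) * Polynomial.eval w q) := by
      filter_upwards [hopen.mem_nhds hz] with w hw
      exact (hFexp w hw).symm
    have hP : HasDerivAt (fun w => Polynomial.eval w p)
        (Complex.exp (F z) * S z * Polynomial.eval z q
          + Complex.exp (F z) * Polynomial.eval z (Polynomial.derivative q)) z :=
      hEq.congr_of_eventuallyEq heq
    have hder : Polynomial.eval z (Polynomial.derivative p)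
        = Complex.exp (F z) * S z * Polynomial.eval z q
          + Complex.exp (F z) * Polynomial.eval z (Polynomial.derivative q) :=
      (Polynomial.hasDerivAt p z).unique hP
    have hpq := hFexp z hz
    have hXK : z^K * d.eval z
        = Polynomial.eval z (Polynomial.derivative p * q - p * Polynomial.derivative q) := by
      rw [hd]; simp
    rw [hXK]
    simp only [Polynomial.eval_sub, Polynomial.eval_mul]
    linear_combination (-(Polynomial.eval z q)) * hder
      + (-(S z * Polynomial.eval z q + Polynomial.eval z (Polynomial.derivative q))
          + Polynomial.eval z (Polynomial.derivative p) - Polynomial.eval z (Polynomial.derivative p)) * hpq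
      + (Polynomial.eval z q * S z - S z * Polynomial.eval z q) * hpq
  set r : ℝ := 1/(1+δ/2) with hr
  have hr0 : 0 < r := by rw [hr]; positivity
  have hr1 : r < 1 := by
    rw [hr, div_lt_one (by linarith)]; linarith
  set M : ℝ := 4*n/δ with hM
  have hM0 : 0 < M := by
    rw [hM]
    have : (0:ℝ) < n := by exact_mod_cast hn
    positivity
  have hS_bound : ∀ z : ℂ, -δ/2 < z.re → ‖S z‖ ≤ M := by
    intro z hz
    have b1 := Sl_bound hδ0 hpr hz
    have b2 := Sl_bound hδ0 hqr hz
    have c1 : (Multiset.card p.roots : ℝ) ≤ n := by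
      exact_mod_cast le_trans (Polynomial.card_roots' p) hpd
    have c2 : (Multiset.card q.roots : ℝ) ≤ n := by
      exact_mod_cast le_trans (Polynomial.card_roots' q) hqd
    have h2δ : (0:ℝ) ≤ 2/δ := by positivity
    calc ‖S z‖ ≤ ‖Sl p z‖ + ‖Sl q z‖ := norm_sub_le _ _
      _ ≤ (n:ℝ) * (2/δ) + (n:ℝ) * (2/δ) := by
          gcongr <;> [exact b1.trans (by gcongr); exact b2.trans (by gcongr)]
      _ = M := by rw [hM]; field_simp; ring
  set B : ℂ → ℂ := fun u => ((δ:ℂ)/(1-u))^K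
      * (d.eval (psi δ u) / (p.eval (psi δ u) * q.eval (psi δ u))) with hB
  have hGB : ∀ u : ℂ, ‖u‖ < 1 → S (psi δ u) = u^K * B u := by
    intro u hu
    have hre := psi_mem hδ0 hu
    have hpqz : p.eval (psi δ u) * q.eval (psi δ u) ≠ 0 :=
      mul_ne_zero (hpne _ hre) (hqne _ hre)
    have h1u : (1:ℂ) - u ≠ 0 := one_sub_ne hu
    have hid' : S (psi δ u) = (psi δ u)^K * d.eval (psi δ u)
        / (p.eval (psi δ u) * q.eval (psi δ u)) := by
      rw [eq_div_iff hpqz]; exact hSid _ hre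
    have hpow : (psi δ u)^K = u^K * ((δ:ℂ)/(1-u))^K := by
      rw [psi, div_pow, div_pow, mul_pow]
      field_simp
    rw [hid', hpow, hB]
    ring
  have hBdiff : DifferentiableOn ℂ B (Metric.ball 0 1) := by
    intro u hu
    rw [Metric.mem_ball, dist_zero_right] at hu
    have h1u : (1:ℂ) - u ≠ 0 := one_sub_ne hu
    have hre := psi_mem hδ0 hu
    have hψ : DifferentiableAt ℂ (psi δ) u := by
      have : DifferentiableAt ℂ (fun u : ℂ => (δ:ℂ) * u / (1 - u)) u :=
        ((differentiableAt_const _).mul differentiableAt_id).div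
          ((differentiableAt_const _).sub differentiableAt_id) h1u
      exact this
    have hde : DifferentiableAt ℂ (fun u => Polynomial.eval (psi δ u) d) u :=
      (d.differentiableAt).comp u hψ
    have hpe : DifferentiableAt ℂ (fun u => Polynomial.eval (psi δ u) p) u :=
      (p.differentiableAt).comp u hψ
    have hqe : DifferentiableAt ℂ (fun u => Polynomial.eval (psi δ u) q) u :=
      (q.differentiableAt).comp u hψ
    have hne : Polynomial.eval (psi δ u) p * Polynomial.eval (psi δ u) q ≠ 0 :=
      mul_ne_zero (hpne _ hre) (hqne _ hre)
    exact (((((differentiableAt_const ((δ:ℂ))).div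
      ((differentiableAt_const _).sub differentiableAt_id) h1u).pow K).mul
      (hde.div (hpe.mul hqe) hne)).differentiableWithinAt)
  have hBmax : ∀ u ∈ closure (Metric.ball (0:ℂ) r), ‖B u‖ ≤ M / r^K := by
    intro u hu
    refine Complex.norm_le_of_forall_mem_frontier_norm_le Metric.isBounded_ball ?_ ?_ hu
    · constructor
      · exact hBdiff.mono (Metric.ball_subset_ball hr1.le)
      · refine (hBdiff.continuousOn).mono ?_
        rw [closure_ball (0:ℂ) hr0.ne']
        exact Metric.closedBall_subset_ball hr1
    · intro v hv
      rw [frontier_ball (0:ℂ) hr0.ne', mem_sphere_zero_iff_norm] at hv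
      have hv1 : ‖v‖ < 1 := by rw [hv]; exact hr1
      have hSb := hS_bound _ (psi_mem hδ0 hv1)
      rw [hGB v hv1, norm_mul, norm_pow, hv] at hSb
      rw [le_div_iff₀ (pow_pos hr0 K)]
      linarith [hSb]
  have hCb : ∀ t : ℝ, 0 ≤ t → t ≤ 1 → ‖S (t:ℂ)‖ ≤ M / r^K * (1/(1+δ))^K := by
    intro t ht0 ht1
    have htδ : (0:ℝ) < t + δ := by linarith
    have htδ' : ((t:ℂ) + (δ:ℂ)) ≠ 0 := by
      intro h
      apply_fun Complex.re at h
      simp at h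
      linarith
    set u : ℂ := ((t/(t+δ) : ℝ) : ℂ) with hu
    have hunorm : ‖u‖ = t/(t+δ) := by
      rw [hu, Complex.norm_real, Real.norm_eq_abs]
      exact abs_of_nonneg (by positivity)
    have hule : t/(t+δ) ≤ 1/(1+δ) := by
      rw [div_le_div_iff₀ htδ (by linarith)]
      nlinarith
    have hur : t/(t+δ) ≤ r := by
      refine hule.trans ?_
      rw [hr, div_le_div_iff₀ (by linarith) (by linarith)]
      nlinarith
    have hu1 : ‖u‖ < 1 := by
      rw [hunorm]; exact lt_of_le_of_lt hur hr1
    have hpsiu : psi δ u = (t:ℂ) := by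
      have hδc : (δ:ℂ) ≠ 0 := by exact_mod_cast hδ0.ne'
      rw [psi, hu]
      push_cast
      field_simp
      rw [add_sub_cancel_left, mul_div_cancel_left₀ _ hδc]
    have hucl : u ∈ closure (Metric.ball (0:ℂ) r) := by
      rw [closure_ball (0:ℂ) hr0.ne', Metric.mem_closedBall, dist_zero_right, hunorm]
      exact hur
    have := hBmax u hucl
    calc ‖S (t:ℂ)‖ = ‖u^K * B u‖ := by rw [← hpsiu, hGB u hu1]
      _ = ‖u‖^K * ‖B u‖ := by rw [norm_mul, norm_pow]
      _ ≤ (1/(1+δ))^K * (M / r^K) := by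
          refine mul_le_mul ?_ this (norm_nonneg _) (by positivity)
          rw [hunorm]
          exact pow_le_pow_left₀ (by positivity) hule K
      _ = M / r^K * (1/(1+δ))^K := by ring
  have hseg : ∀ x ∈ segment ℝ (0:ℂ) 1, ∃ t:ℝ, 0 ≤ t ∧ t ≤ 1 ∧ x = (t:ℂ) := by
    intro x hx
    rw [segment_eq_image] at hx
    obtain ⟨t, ht, rfl⟩ := hx
    refine ⟨t, ht.1, ht.2, ?_⟩
    simp [Complex.real_smul]
  have hder : ∀ x ∈ segment ℝ (0:ℂ) 1, HasDerivWithinAt F (S x) (segment ℝ (0:ℂ) 1) x := by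
    intro x hx
    obtain ⟨t, ht0, ht1, rfl⟩ := hseg x hx
    refine (hFd _ ?_).hasDerivWithinAt
    rw [Complex.ofReal_re]; linarith
  have hbnd : ∀ x ∈ segment ℝ (0:ℂ) 1, ‖S x‖ ≤ M / r^K * (1/(1+δ))^K := by
    intro x hx
    obtain ⟨t, ht0, ht1, rfl⟩ := hseg x hx
    exact hCb t ht0 ht1
  have hmean := Convex.norm_image_sub_le_of_norm_hasDerivWithin_le hder hbnd
    (convex_segment _ _) (left_mem_segment ℝ (0:ℂ) 1) (right_mem_segment ℝ (0:ℂ) 1)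
  have hF0 : F 0 = 0 := by
    have hzp : Pl p 0 = 0 := by
      apply Multiset.sum_eq_zero
      intro x hx
      rw [Multiset.mem_map] at hx
      obtain ⟨rr, _, rfl⟩ := hx
      simp [zero_sub]
    have hzq : Pl q 0 = 0 := by
      apply Multiset.sum_eq_zero
      intro x hx
      rw [Multiset.mem_map] at hx
      obtain ⟨rr, _, rfl⟩ := hx
      simp [zero_sub]
    show Pl p 0 - Pl q 0 = 0
    rw [hzp, hzq, sub_self]
  have hFnorm : ‖F 1‖ ≤ M / r^K * (1/(1+δ))^K := by
    rw [hF0, sub_zero] at hmean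
    simpa using hmean
  have hn0 : (0:ℝ) < n := by exact_mod_cast hn
  have hCbε : M / r^K * (1/(1+δ))^K ≤ ε := by
    have hXpos : (0:ℝ) < 4*n/(ε*δ) := by positivity
    have step1 : M / r^K * (1/(1+δ))^K = M * ((1+δ/2)/(1+δ))^K := by
      have h1 : ((1:ℝ)+δ/2) ≠ 0 := by linarith
      have h2 : ((1:ℝ)+δ) ≠ 0 := by linarith
      rw [hr, div_pow, div_pow, div_pow]
      rw [one_pow]
      field_simp
    have step2 : (1+δ/2)/(1+δ) ≤ 1 - δ/4 := by
      rw [div_le_iff₀ (by linarith)]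
      nlinarith
    have step3 : ((1+δ/2)/(1+δ))^K ≤ (1-δ/4)^K :=
      pow_le_pow_left₀ (by positivity) step2 K
    have step4 : (1-δ/4:ℝ) ≤ Real.exp (-(δ/4)) := by
      have := Real.add_one_le_exp (-(δ/4)); linarith
    have step5 : (1-δ/4:ℝ)^K ≤ Real.exp (-(δ/4))^K :=
      pow_le_pow_left₀ (by linarith) step4 K
    have step6 : Real.exp (-(δ/4))^K = Real.exp (-(δ/4)*K) := by
      rw [← Real.exp_nat_mul]; ring_nf
    have step7 : -(δ/4)*K ≤ -Real.log (4*n/(ε*δ)) := by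
      have h := mul_le_mul_of_nonneg_left hK (by positivity : (0:ℝ) ≤ δ/4)
      have hδne : δ ≠ 0 := hδ0.ne'
      have : δ/4 * (4/δ * Real.log (4*n/(ε*δ))) = Real.log (4*n/(ε*δ)) := by
        field_simp
      rw [this] at h
      linarith
    have step8 : Real.exp (-(δ/4)*K) ≤ ε*δ/(4*n) := by
      have h8 := Real.exp_le_exp.mpr step7
      rw [Real.exp_neg, Real.exp_log hXpos, inv_div] at h8
      exact h8
    have chain : ((1+δ/2)/(1+δ))^K ≤ ε*δ/(4*n) := by
      refine step3.trans (step5.trans ?_)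
      rw [step6]; exact step8
    rw [step1]
    calc M * ((1+δ/2)/(1+δ))^K ≤ M * (ε*δ/(4*n)) :=
          mul_le_mul_of_nonneg_left chain hM0.le
      _ = ε := by rw [hM]; field_simp
  refine ⟨F 1, ?_, ?_⟩
  · have h1 : -δ/2 < (1:ℂ).re := by
      rw [Complex.one_re]; linarith
    rw [eq_div_iff (hqne 1 h1)]
    exact hFexp 1 h1
  · exact hFnorm.trans hCbε
lemma abs_arg_le_im_div_re {z : ℂ} (hre : 0 < z.re) : |Complex.arg z| ≤ |z.im| / z.re := by
  have h2 : |Complex.arg z| < Real.pi/2 :=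
    Complex.abs_arg_lt_pi_div_two_iff.mpr (Or.inl hre)
  have htan := Complex.tan_arg z
  rcases le_or_gt 0 (Complex.arg z) with h | h
  · have him : 0 ≤ z.im := Complex.arg_nonneg_iff.mp h
    rw [_root_.abs_of_nonneg h] at h2 ⊢
    calc Complex.arg z ≤ Real.tan (Complex.arg z) := Real.le_tan h h2
      _ = z.im / z.re := htan
      _ = |z.im| / z.re := by rw [_root_.abs_of_nonneg him]
  · have him : z.im < 0 := Complex.arg_neg_iff.mp h
    rw [_root_.abs_of_neg h] at h2 ⊢
    have htan' : Real.tan (-Complex.arg z) = -z.im / z.re := by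
      rw [Real.tan_neg, htan]; ring
    calc -Complex.arg z ≤ Real.tan (-Complex.arg z) := Real.le_tan (by linarith) h2
      _ = -z.im / z.re := htan'
      _ = |z.im| / z.re := by rw [_root_.abs_of_neg him]

lemma log_numeric : Real.log ((1999:ℝ)/999) ≤ 7/10 := by
  have h64 : ((1999:ℝ)/999) ≤ (1.0109375:ℝ)^64 := by norm_num
  calc Real.log ((1999:ℝ)/999) ≤ Real.log ((1.0109375:ℝ)^64) :=
        Real.log_le_log (by norm_num) h64
    _ = 64 * Real.log (1.0109375:ℝ) := by rw [Real.log_pow]; norm_num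
    _ ≤ 64 * ((1.0109375:ℝ) - 1) := by
        have := Real.log_le_sub_one_of_pos (show (0:ℝ) < 1.0109375 by norm_num)
        linarith
    _ ≤ 7/10 := by norm_num

lemma key_lin {δ : ℝ} (hδl : 999/1000 < δ) (hδ1 : δ < 1) {a : ℂ}
    (ha : δ * Complex.normSq a ≤ a.re) :
    (1:ℝ) ≤ (1+a).re ∧ ‖1+a‖ ≤ 1999/999
      ∧ |(1+a).im| ≤ (709/2000) * (1+a).re := by
  set x := a.re with hx
  set y := a.im with hy
  have hns : Complex.normSq a = x^2 + y^2 := by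
    rw [Complex.normSq_apply]; ring
  rw [hns] at ha
  have hδ0 : (0:ℝ) < δ := by linarith
  have hx0 : 0 ≤ x := le_trans (by positivity) ha
  have hre1 : (1+a).re = 1 + x := by simp [Complex.add_re, hx]
  have him : (1+a).im = y := by simp [Complex.add_im, hy]
  refine ⟨by rw [hre1]; linarith, ?_, ?_⟩
  · have habs : ‖a‖ ≤ 1/δ := by
      have h1 : ‖a‖^2 = x^2 + y^2 := by
        rw [← hns, Complex.sq_norm]
      have h2 : x ≤ ‖a‖ := Complex.re_le_norm a
      have h3 : δ * ‖a‖^2 ≤ ‖a‖ := by rw [h1]; linarith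
      rcases eq_or_lt_of_le (norm_nonneg a) with hA | hA
      · rw [← hA]; positivity
      · rw [le_div_iff₀ hδ0]
        nlinarith [h3, hA]
    calc ‖1+a‖ ≤ ‖(1:ℂ)‖ + ‖a‖ := norm_add_le _ _
      _ ≤ 1 + 1/δ := by
          rw [norm_one]
          linarith
      _ ≤ 1999/999 := by
          have : 1/δ ≤ 1000/999 := by
            rw [div_le_div_iff₀ hδ0 (by norm_num)]
            linarith
          linarith
  · rw [him, hre1]
    have hsq : y^2 ≤ (709/2000 * (1+x))^2 := by
      have h999 : (0:ℝ) ≤ (δ - 999/1000) * (x^2 + y^2) :=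
        mul_nonneg (by linarith) (by positivity)
      nlinarith [sq_nonneg (x - 1/3), sq_nonneg y, hx0, ha, h999]
    have h1 : |y| = Real.sqrt (y^2) := (Real.sqrt_sq_eq_abs y).symm
    have h2 : (709:ℝ)/2000 * (1+x) = Real.sqrt ((709/2000 * (1+x))^2) := by
      rw [Real.sqrt_sq (by positivity)]
    rw [h1, h2]
    exact Real.sqrt_le_sqrt hsq

lemma lin_struct {δ : ℝ} (hδ0 : 0 < δ) {p : Polynomial ℂ} (hpd : p.natDegree ≤ 1)
    (hproot : ∀ z : ℂ, p.eval z = 0 → z.re ≤ -δ) :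
    p.coeff 0 ≠ 0 ∧ δ * Complex.normSq (p.coeff 1 / p.coeff 0) ≤ (p.coeff 1 / p.coeff 0).re
      ∧ p.eval 1 = p.coeff 0 * (1 + p.coeff 1 / p.coeff 0) := by
  have hrep := Polynomial.eq_X_add_C_of_natDegree_le_one hpd
  have heval : ∀ z : ℂ, p.eval z = p.coeff 1 * z + p.coeff 0 := by
    intro z
    conv_lhs => rw [hrep]
    simp
  have hc0 : p.coeff 0 ≠ 0 := by
    intro h
    have h0 : p.eval 0 = 0 := by rw [heval 0, h]; ring
    have := hproot 0 h0
    rw [Complex.zero_re] at this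
    linarith
  refine ⟨hc0, ?_, ?_⟩
  · by_cases hc1 : p.coeff 1 = 0
    · rw [hc1, zero_div]; simp
    · set a := p.coeff 1 / p.coeff 0 with haa
      have ha0 : a ≠ 0 := div_ne_zero hc1 hc0
      have hz0 : p.eval (-(p.coeff 0 / p.coeff 1)) = 0 := by
        rw [heval]; field_simp; ring
      have hre := hproot _ hz0
      have hzeq : -(p.coeff 0 / p.coeff 1) = -a⁻¹ := by rw [haa, inv_div]
      rw [hzeq, Complex.neg_re] at hre
      have hinv : δ ≤ (a⁻¹).re := by linarith
      rw [Complex.inv_re] at hinv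
      have hns : 0 < Complex.normSq a := Complex.normSq_pos.mpr ha0
      rw [le_div_iff₀ hns] at hinv
      linarith
  · rw [heval 1]
    field_simp
    ring

lemma corner {δ ε : ℝ} {p q : Polynomial ℂ} (hδl : 999/1000 < δ) (hδ1 : δ < 1)
    (hεl : 999/1000 < ε)
    (hpd : p.natDegree ≤ 1) (hqd : q.natDegree ≤ 1)
    (hproot : ∀ z : ℂ, p.eval z = 0 → z.re ≤ -δ)
    (hqroot : ∀ z : ℂ, q.eval z = 0 → z.re ≤ -δ)
    (h00 : p.coeff 0 = q.coeff 0) :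
    ∃ w : ℂ, Complex.exp w = p.eval 1 / q.eval 1 ∧ ‖w‖ ≤ ε := by
  have hδ0 : (0:ℝ) < δ := by linarith
  obtain ⟨hc0p, hap, hevp⟩ := lin_struct hδ0 hpd hproot
  obtain ⟨hc0q, haq, hevq⟩ := lin_struct hδ0 hqd hqroot
  set a := p.coeff 1 / p.coeff 0 with haa
  set b := q.coeff 1 / q.coeff 0 with hbb
  obtain ⟨hrea, habsa, hima⟩ := key_lin hδl hδ1 hap
  obtain ⟨hreb, habsb, himb⟩ := key_lin hδl hδ1 haq
  have h1a : (1:ℂ) + a ≠ 0 := by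
    intro h
    rw [h] at hrea
    rw [Complex.zero_re] at hrea
    linarith
  have h1b : (1:ℂ) + b ≠ 0 := by
    intro h
    rw [h] at hreb
    rw [Complex.zero_re] at hreb
    linarith
  refine ⟨Complex.log (1+a) - Complex.log (1+b), ?_, ?_⟩
  · rw [Complex.exp_sub, Complex.exp_log h1a, Complex.exp_log h1b]
    rw [hevp, hevq, ← h00, mul_div_mul_left _ _ hc0p]
  · set w := Complex.log (1+a) - Complex.log (1+b) with hw
    have hwre : |w.re| ≤ 7/10 := by
      have hra : w.re = Real.log ‖1+a‖ - Real.log ‖1+b‖ := by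
        rw [hw, Complex.sub_re, Complex.log_re, Complex.log_re]
      have hbnd : ∀ c : ℂ, (1:ℝ) ≤ (1+c).re → ‖1+c‖ ≤ 1999/999 →
          0 ≤ Real.log ‖1+c‖ ∧ Real.log ‖1+c‖ ≤ 7/10 := by
        intro c h1 h2
        have hge : (1:ℝ) ≤ ‖1+c‖ := le_trans h1 (Complex.re_le_norm _)
        constructor
        · exact Real.log_nonneg hge
        · exact le_trans (Real.log_le_log (by linarith) h2) log_numeric
      obtain ⟨la0, la7⟩ := hbnd a hrea habsa
      obtain ⟨lb0, lb7⟩ := hbnd b hreb habsb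
      rw [hra, abs_le]
      constructor <;> linarith
    have hwim : |w.im| ≤ 709/1000 := by
      have hia : w.im = Complex.arg (1+a) - Complex.arg (1+b) := by
        rw [hw, Complex.sub_im, Complex.log_im, Complex.log_im]
      have hbnd : ∀ c : ℂ, (1:ℝ) ≤ (1+c).re → |(1+c).im| ≤ (709/2000) * (1+c).re →
          |Complex.arg (1+c)| ≤ 709/2000 := by
        intro c h1 h2
        have hre0 : (0:ℝ) < (1+c).re := by linarith
        refine (abs_arg_le_im_div_re hre0).trans ?_
        rw [div_le_iff₀ hre0]
        linarith
      have ha' := hbnd a hrea hima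
      have hb' := hbnd b hreb himb
      rw [hia]
      calc |Complex.arg (1+a) - Complex.arg (1+b)|
          ≤ |Complex.arg (1+a)| + |Complex.arg (1+b)| := abs_sub _ _
        _ ≤ 709/1000 := by linarith
    have hsq : ‖w‖^2 = w.re^2 + w.im^2 := by
      rw [Complex.sq_norm, Complex.normSq_apply]; ring
    nlinarith [hsq, hwre, hwim, norm_nonneg w, hεl, _root_.sq_abs w.re, _root_.sq_abs w.im,
      abs_nonneg w.re, abs_nonneg w.im]


/-- Theorem 1.4 (two-polynomial form): if all roots of the complex polynomials `p` and `q`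
have real part `≤ -δ`, and `p` and `q` agree on all coefficients of index
`k ≤ (c/δ)·ln(n/(εδ))`, then `p(1)/q(1)` is `e^w` for some `w` with `|w| ≤ ε`. -/
theorem stmt3 :
    ∃ c : ℝ, 0 < c ∧
      ∀ (δ ε : ℝ) (n : ℕ) (p q : Polynomial ℂ),
        0 < δ → δ < 1 → 0 < ε → ε < 1 → 1 ≤ n →
        p ≠ 0 → q ≠ 0 → p.natDegree ≤ n → q.natDegree ≤ n →
        (∀ z : ℂ, p.eval z = 0 → z.re ≤ -δ) →
        (∀ z : ℂ, q.eval z = 0 → z.re ≤ -δ) →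
        (∀ k : ℕ, (k : ℝ) ≤ c / δ * Real.log (n / (ε * δ)) → p.coeff k = q.coeff k) →
        ∃ w : ℂ, Complex.exp w = p.eval 1 / q.eval 1 ∧ ‖w‖ ≤ ε := by
  refine ⟨1000000, by norm_num, ?_⟩
  intro δ ε n p q hδ0 hδ1 hε0 hε1 hn hp hq hpd hqd hproot hqroot hcoeff
  have hn0 : (0:ℝ) < (n:ℝ) := by exact_mod_cast hn
  have hεδ0 : (0:ℝ) < ε * δ := mul_pos hε0 hδ0
  have hεδ1 : ε * δ < 1 := by nlinarith
  set L := Real.log ((n:ℝ) / (ε * δ)) with hL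
  have hX1 : (1:ℝ) < (n:ℝ) / (ε * δ) := by
    rw [lt_div_iff₀ hεδ0, one_mul]
    have hn1' : (1:ℝ) ≤ (n:ℝ) := by exact_mod_cast hn
    linarith
  have hL0 : 0 < L := Real.log_pos hX1
  by_cases hcase : (1:ℝ)/1000 ≤ L
  · -- main analytic case
    set K := ⌊(1000000 / δ * L)⌋₊ with hK
    have hx0 : (0:ℝ) ≤ 1000000 / δ * L := by positivity
    have hcov : ∀ k ≤ K, p.coeff k = q.coeff k := by
      intro k hk
      apply hcoeff
      calc (k:ℝ) ≤ (K:ℝ) := by exact_mod_cast hk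
        _ ≤ 1000000 / δ * L := Nat.floor_le hx0
    have hfl : 1000000 / δ * L < (K:ℝ) + 1 := Nat.lt_floor_add_one _
    have hlog4 : Real.log (4 * (n:ℝ) / (ε * δ)) = Real.log 4 + L := by
      rw [hL, mul_div_assoc, Real.log_mul (by norm_num) (by positivity)]
    have hl4 : Real.log 4 ≤ 1.4 := by
      have h2 : Real.log 4 = 2 * Real.log 2 := by
        rw [show (4:ℝ) = 2^2 by norm_num, Real.log_pow]
        norm_num
      have := Real.log_two_lt_d9
      rw [h2]; linarith
    have hKb : 4/δ * Real.log (4 * (n:ℝ) / (ε * δ)) ≤ (K:ℝ) := by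
      rw [hlog4]
      have key : 4 * (Real.log 4 + L) + δ ≤ 1000000 * L := by nlinarith
      have hδne : δ ≠ 0 := hδ0.ne'
      have h1 : 4/δ * (Real.log 4 + L) ≤ 1000000 / δ * L - 1 := by
        rw [div_mul_eq_mul_div, div_mul_eq_mul_div, le_sub_iff_add_le, div_add' _ _ _ hδne,
          div_le_div_iff₀ hδ0 hδ0]
        nlinarith
      linarith
    exact main_analytic hδ0 hδ1 hε0 hn hp hq hpd hqd hproot hqroot hcov hKb
  · -- corner case
    push_neg at hcase
    have hexpL : Real.exp L = (n:ℝ) / (ε * δ) := Real.exp_log (by positivity)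
    have hexp1000 : Real.exp ((1:ℝ)/1000) ≤ 1000/999 := by
      have h1 := Real.add_one_le_exp (-(1/1000 : ℝ))
      have h2 : Real.exp (-(1/1000:ℝ)) = (Real.exp ((1:ℝ)/1000))⁻¹ := by
        rw [Real.exp_neg]
      rw [h2] at h1
      have h3 : (0:ℝ) < Real.exp ((1:ℝ)/1000) := Real.exp_pos _
      rw [show -(1/1000:ℝ) + 1 = 999/1000 by norm_num] at h1
      have h4 := inv_anti₀ (by norm_num : (0:ℝ) < 999/1000) h1
      rw [inv_inv] at h4
      calc Real.exp ((1:ℝ)/1000) ≤ ((999:ℝ)/1000)⁻¹ := h4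
        _ = 1000/999 := by norm_num
    have hlt : (n:ℝ) / (ε * δ) < 1000/999 := by
      rw [← hexpL]
      calc Real.exp L < Real.exp ((1:ℝ)/1000) := Real.exp_lt_exp.mpr hcase
        _ ≤ 1000/999 := hexp1000
    have hn1 : n = 1 := by
      have h1 : (n:ℝ) ≤ (n:ℝ) / (ε * δ) := by
        rw [le_div_iff₀ hεδ0]
        nlinarith
      have h2 : (n:ℝ) < 2 := by
        calc (n:ℝ) ≤ (n:ℝ)/(ε*δ) := h1
          _ < 1000/999 := hlt
          _ < 2 := by norm_num
      have : n < 2 := by exact_mod_cast h2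
      omega
    have hεδl : 999/1000 < ε * δ := by
      rw [hn1] at hlt
      simp only [Nat.cast_one] at hlt
      rw [div_lt_div_iff₀ hεδ0 (by norm_num : (0:ℝ) < 999)] at hlt
      nlinarith [hlt]
    have hδl : 999/1000 < δ := by
      nlinarith [mul_pos hδ0 (by linarith : (0:ℝ) < 1 - ε)]
    have hεl : 999/1000 < ε := by
      nlinarith [mul_pos hε0 (by linarith : (0:ℝ) < 1 - δ)]
    have h00 : p.coeff 0 = q.coeff 0 := by
      apply hcoeff
      push_cast
      positivity
    exact corner hδl hδ1 hεl (hn1 ▸ hpd) (hn1 ▸ hqd) hproot hqroot h00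
end

section
/- There exists an absolute constant c > 0 with the following property. Let 0 < δ < 1, let 0 < ε < 1, let n ≥ 1, and let p(z) = a_0 + a_1 z + ... + a_n z^n and q(z) = b_0 + b_1 z + ... + b_n z^n be complex polynomials of degree at most n such that p(z) ≠ 0 and q(z) ≠ 0 for every z ∈ ℂ whose distance to the real segment [0,1] ⊂ ℂ is less than δ. If a_k = b_k for every integer k with 0 ≤ k ≤ e^{c/δ}·ln(n·e^{c/δ}/ε), then there exists w ∈ ℂ with e^w = p(1)/q(1) and |w| ≤ ε. -/
set_option maxHeartbeats 1000000

open Complex Set Metric Polynomial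

/-- open neighborhood of the segment [0,1] of radius r -/
def segN (r : ℝ) : Set ℂ := {z : ℂ | ∃ t : ℝ, t ∈ Set.Icc (0:ℝ) 1 ∧ ‖z - t‖ < r}

lemma isOpen_segN (r : ℝ) : IsOpen (segN r) := by
  rw [Metric.isOpen_iff]
  rintro z ⟨t, ht, hzt⟩
  refine ⟨r - ‖z - t‖, by linarith, fun w hw => ?_⟩
  rw [mem_ball, Complex.dist_eq] at hw
  exact ⟨t, ht, by
    calc ‖w - t‖ ≤ ‖w - z‖ + ‖z - t‖ := by
          simpa using norm_add_le (w - z) (z - t)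
    _ < r := by linarith⟩

lemma convex_segN (r : ℝ) : Convex ℝ (segN r) := by
  rintro z1 ⟨t1, ht1, h1⟩ z2 ⟨t2, ht2, h2⟩ a b ha hb hab
  refine ⟨a * t1 + b * t2, ?_, ?_⟩
  · constructor
    · have := ht1.1; have := ht2.1; positivity
    · nlinarith [ht1.1, ht1.2, ht2.1, ht2.2]
  · have : (a • z1 + b • z2) - ((a * t1 + b * t2 : ℝ) : ℂ)
        = a • (z1 - (t1:ℝ)) + b • (z2 - (t2:ℝ)) := by
      push_cast
      simp only [Complex.real_smul]
      ring
    rw [this]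
    calc ‖a • (z1 - (t1:ℝ)) + b • (z2 - (t2:ℝ))‖
        ≤ ‖a • (z1 - (t1:ℝ))‖ + ‖b • (z2 - (t2:ℝ))‖ :=
          norm_add_le _ _
      _ = a * ‖z1 - (t1:ℝ)‖ + b * ‖z2 - (t2:ℝ)‖ := by
          simp only [Complex.real_smul, norm_mul, Complex.norm_real, Real.norm_eq_abs,
            _root_.abs_of_nonneg ha, _root_.abs_of_nonneg hb]
      _ < r := by
          rcases lt_or_ge 0 a with hA | hA
          · have e1 : a * ‖z1 - (t1:ℝ)‖ < a * r := by
              exact (mul_lt_mul_iff_right₀ hA).2 h1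
            have e2 : b * ‖z2 - (t2:ℝ)‖ ≤ b * r :=
              mul_le_mul_of_nonneg_left h2.le hb
            have hr' : a * r + b * r = r := by rw [← add_mul, hab, one_mul]
            linarith
          · have ha0 : a = 0 := le_antisymm hA ha
            have hb1 : b = 1 := by linarith
            simp [ha0, hb1] at *
            linarith

lemma mem_segN_of_mem_Icc {r : ℝ} (hr : 0 < r) {t : ℝ} (ht : t ∈ Set.Icc (0:ℝ) 1) :
    (t : ℂ) ∈ segN r := ⟨t, ht, by simpa using hr⟩

lemma closedBall_subset_segN {r r' : ℝ} (h : r' < r) {t : ℝ} (ht : t ∈ Set.Icc (0:ℝ) 1) :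
    Metric.closedBall (t : ℂ) r' ⊆ segN r := by
  intro z hz
  rw [mem_closedBall, Complex.dist_eq] at hz
  exact ⟨t, ht, lt_of_le_of_lt hz h⟩

lemma segN_mono {r r' : ℝ} (h : r' ≤ r) : segN r' ⊆ segN r := by
  rintro z ⟨t, ht, hzt⟩; exact ⟨t, ht, lt_of_lt_of_le hzt h⟩

lemma norm_le_of_mem_segN {r : ℝ} {z : ℂ} (hz : z ∈ segN r) : ‖z‖ ≤ 1 + r := by
  obtain ⟨t, ht, hzt⟩ := hz
  calc ‖z‖ ≤ ‖z - t‖ + ‖(t:ℂ)‖ := by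
        simpa using norm_add_le (z - t) (t:ℂ)
    _ ≤ 1 + r := by
        rw [Complex.norm_real, Real.norm_eq_abs, _root_.abs_of_nonneg ht.1]
        linarith [ht.2]



/-- a "far" point: at distance ≥ δ from the segment -/
def Far (δ : ℝ) (ζ : ℂ) : Prop := ∀ t : ℝ, t ∈ Set.Icc (0:ℝ) 1 → δ ≤ ‖ζ - t‖

lemma Far.ne_zero {δ : ℝ} (hδ : 0 < δ) {ζ : ℂ} (h : Far δ ζ) : ζ ≠ 0 := by
  intro h0
  have := h 0 ⟨le_refl 0, zero_le_one⟩
  simp [h0] at this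
  linarith

lemma Far.dist_lower {δ : ℝ} {ζ : ℂ} (h : Far δ ζ) {z : ℂ} (hz : z ∈ segN (3*δ/4)) :
    δ/4 ≤ ‖z - ζ‖ := by
  obtain ⟨t, ht, hzt⟩ := hz
  have h1 : δ ≤ ‖ζ - t‖ := h t ht
  have : ‖ζ - t‖ ≤ ‖ζ - z‖ + ‖z - t‖ := by
    simpa using norm_add_le (ζ - z) (z - t)
  have h2 : ‖ζ - z‖ = ‖z - ζ‖ := by
    rw [← norm_neg]; ring_nf
  linarith

lemma Far.slit {δ : ℝ} (hδ : 0 < δ) {ζ : ℂ} (h : Far δ ζ) {z : ℂ} (hz : z ∈ segN (3*δ/4)) :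
    1 - z / ζ ∈ Complex.slitPlane := by
  have hζ0 : ζ ≠ 0 := h.ne_zero hδ
  rw [Complex.mem_slitPlane_iff]
  by_contra hcon
  push_neg at hcon
  obtain ⟨hre, him⟩ := hcon
  -- 1 - z/ζ = (x : ℝ) with x ≤ 0, so z = s ζ with s = 1 - x ≥ 1
  set w := 1 - z / ζ with hw
  have hwre : (w.re : ℂ) = w := by
    rw [Complex.ext_iff]; simp [him]
  have h' : (1 - w) * ζ = z := by rw [hw]; field_simp; ring
  have hzval : z = ((1 - w.re : ℝ) : ℂ) * ζ := by
    rw [← h']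
    congr 1
    push_cast
    rw [hwre]
  set s : ℝ := 1 - w.re with hs
  have hs1 : 1 ≤ s := by rw [hs]; linarith
  obtain ⟨t, ht, hzt⟩ := hz
  have hts : t / s ∈ Set.Icc (0:ℝ) 1 := by
    constructor
    · exact div_nonneg ht.1 (by linarith)
    · rw [div_le_one (by linarith)]
      linarith [ht.2]
  have key : δ ≤ ‖z - t‖ := by
    have hsC : (s:ℂ) ≠ 0 := by
      exact_mod_cast (by linarith : (s:ℝ) ≠ 0)
    have : z - (t:ℂ) = (s:ℂ) * (ζ - (t/s : ℝ)) := by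
      rw [hzval]
      push_cast
      field_simp
    rw [this, norm_mul, Complex.norm_real, Real.norm_eq_abs, _root_.abs_of_nonneg (by linarith : (0:ℝ) ≤ s)]
    have h1 : δ ≤ ‖ζ - (t/s : ℝ)‖ := h (t/s) hts
    nlinarith [norm_nonneg (ζ - ((t/s : ℝ) : ℂ))]
  linarith

/-- the multiset branch-sum logarithm -/
noncomputable def mlog (s : Multiset ℂ) (z : ℂ) : ℂ :=
  (s.map (fun ζ => Complex.log (1 - z / ζ))).sum

noncomputable def msum (s : Multiset ℂ) (z : ℂ) : ℂ :=
  (s.map (fun ζ => (z - ζ)⁻¹)).sum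

lemma mlog_zero (s : Multiset ℂ) : mlog s 0 = 0 := by
  unfold mlog
  simp

lemma Far.one_sub_ne_zero {δ : ℝ} (hδ : 0 < δ) {ζ : ℂ} (h : Far δ ζ) {z : ℂ}
    (hz : z ∈ segN (3*δ/4)) : 1 - z / ζ ≠ 0 :=
  Complex.slitPlane_ne_zero (h.slit hδ hz)

lemma hasDerivAt_mlog {δ : ℝ} (hδ : 0 < δ) (s : Multiset ℂ) (hs : ∀ ζ ∈ s, Far δ ζ)
    {z : ℂ} (hz : z ∈ segN (3*δ/4)) :
    HasDerivAt (mlog s) (msum s z) z := by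
  induction s using Multiset.induction_on with
  | empty =>
    have hm0 : mlog 0 = fun _ => 0 := by funext w; simp [mlog]
    rw [hm0]; simpa [msum] using hasDerivAt_const z (0:ℂ)
  | cons ζ s ih =>
    have hζ : Far δ ζ := hs ζ (Multiset.mem_cons_self ζ s)
    have hs' : ∀ ξ ∈ s, Far δ ξ := fun ξ hξ => hs ξ (Multiset.mem_cons_of_mem hξ)
    have hζ0 : ζ ≠ 0 := hζ.ne_zero hδ
    have hne : 1 - z / ζ ≠ 0 := hζ.one_sub_ne_zero hδ hz
    have hzζ : z ≠ ζ := by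
      intro hzz
      apply hne
      rw [hzz, div_self hζ0]; ring
    have h1 : HasDerivAt (fun w : ℂ => 1 - w / ζ) (-ζ⁻¹) z := by
      simpa using ((hasDerivAt_id z).div_const ζ).const_sub 1
    have h2 : HasDerivAt (fun w : ℂ => Complex.log (1 - w / ζ)) ((-ζ⁻¹) / (1 - z/ζ)) z :=
      h1.clog (hζ.slit hδ hz)
    have h3 : (-ζ⁻¹) / (1 - z/ζ) = (z - ζ)⁻¹ := by
      have hζz : (ζ - z) ≠ 0 := sub_ne_zero.mpr (Ne.symm hzζ)
      have hzζ' : (z - ζ) ≠ 0 := sub_ne_zero.mpr hzζ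
      field_simp
      ring
    rw [h3] at h2
    have heq : mlog (ζ ::ₘ s) = fun w => Complex.log (1 - w / ζ) + mlog s w := by
      funext w; simp [mlog]
    have heq2 : msum (ζ ::ₘ s) z = (z - ζ)⁻¹ + msum s z := by simp [msum]
    rw [heq, heq2]
    exact h2.add (ih hs')

lemma exp_mlog {δ : ℝ} (hδ : 0 < δ) (s : Multiset ℂ) (hs : ∀ ζ ∈ s, Far δ ζ)
    {z : ℂ} (hz : z ∈ segN (3*δ/4)) :
    Complex.exp (mlog s z) = (s.map (fun ζ => 1 - z / ζ)).prod := by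
  induction s using Multiset.induction_on with
  | empty => simp [mlog]
  | cons ζ s ih =>
    have hζ : Far δ ζ := hs ζ (Multiset.mem_cons_self ζ s)
    have hs' : ∀ ξ ∈ s, Far δ ξ := fun ξ hξ => hs ξ (Multiset.mem_cons_of_mem hξ)
    simp only [mlog, Multiset.map_cons, Multiset.sum_cons, Multiset.prod_cons, Complex.exp_add]
    rw [Complex.exp_log (hζ.one_sub_ne_zero hδ hz)]
    congr 1
    simpa [mlog] using ih hs'

lemma norm_msum_le {δ : ℝ} (hδ : 0 < δ) (s : Multiset ℂ) (hs : ∀ ζ ∈ s, Far δ ζ)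
    {z : ℂ} (hz : z ∈ segN (3*δ/4)) :
    ‖msum s z‖ ≤ (Multiset.card s : ℝ) * (4/δ) := by
  unfold msum
  calc ‖(s.map (fun ζ => (z - ζ)⁻¹)).sum‖
      ≤ ((s.map (fun ζ => (z - ζ)⁻¹)).map (fun w => ‖w‖)).sum := by
        simpa using norm_multiset_sum_le (s.map (fun ζ => (z - ζ)⁻¹))
    _ ≤ (Multiset.card s : ℝ) * (4/δ) := by
        rw [Multiset.map_map]
        have hcard : Multiset.card (s.map (fun ζ => ‖(z - ζ)⁻¹‖)) = Multiset.card s := by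
          simp
        refine le_trans (Multiset.sum_le_card_nsmul _ (4/δ) ?_) ?_
        · intro x hx
          obtain ⟨ζ, hζs, rfl⟩ := Multiset.mem_map.1 hx
          have h1 : δ/4 ≤ ‖z - ζ‖ := (hs ζ hζs).dist_lower hz
          rw [Function.comp_apply, norm_inv]
          rw [inv_le_comm₀ (by linarith) (by positivity), inv_div]
          linarith [h1]
        · simp [nsmul_eq_mul]



lemma roots_far (p : ℂ[X]) (hp : ∀ z ∈ segN δ, p.eval z ≠ 0) :
    ∀ ζ ∈ p.roots, ∀ t : ℝ, t ∈ Set.Icc (0:ℝ) 1 → δ ≤ ‖ζ - t‖ := by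
  intro ζ hζ t ht
  by_contra hlt
  push_neg at hlt
  exact hp ζ ⟨t, ht, hlt⟩ ((Polynomial.mem_roots'.1 hζ).2)

lemma poly_eval_eq_prod (p : ℂ[X]) (hp0 : p.eval 0 ≠ 0) (z : ℂ) :
    p.eval z = p.eval 0 * ((p.roots.map (fun ζ => 1 - z / ζ)).prod) := by
  have hroots0 : ∀ ζ ∈ p.roots, ζ ≠ 0 := by
    intro ζ hζ h0
    apply hp0
    have := (Polynomial.mem_roots'.1 hζ).2
    rwa [h0] at this
  have hsplit := Splits.eq_prod_roots (IsAlgClosed.splits p)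
  have heval : ∀ w : ℂ, p.eval w = p.leadingCoeff * ((p.roots.map (fun ζ => w - ζ)).prod) := by
    intro w
    conv_lhs => rw [hsplit]
    rw [eval_mul, eval_C, eval_multiset_prod, Multiset.map_map]
    congr 1
    exact congrArg Multiset.prod (Multiset.map_congr rfl (fun ζ _ => by
      simp [Function.comp]))
  rw [heval z, heval 0, mul_assoc]
  congr 1
  rw [← Multiset.prod_map_mul]
  refine congrArg Multiset.prod (Multiset.map_congr rfl (fun ζ hζ => ?_))
  field_simp [hroots0 ζ hζ]
  ring

lemma exists_X_pow_dvd (p q : ℂ[X]) (K : ℕ) (h : ∀ k ≤ K, p.coeff k = q.coeff k) :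
    ∃ h : ℂ[X], derivative p * q - p * derivative q = X ^ K * h := by
  have hd : (X : ℂ[X]) ^ (K+1) ∣ (p - q) := by
    rw [Polynomial.X_pow_dvd_iff]
    intro d hd
    rw [coeff_sub, h d (Nat.lt_succ_iff.1 hd), sub_self]
  obtain ⟨r, hr⟩ := hd
  have e2 : (X : ℂ[X]) ^ K ∣ derivative (p - q) := by
    rw [hr, derivative_mul, derivative_X_pow]
    push_cast
    refine dvd_add (Dvd.dvd.mul_right ?_ r) (Dvd.dvd.mul_right ?_ (derivative r))
    · exact Dvd.dvd.mul_left (by simpa using pow_dvd_pow (X : ℂ[X]) (le_refl K)) _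
    · exact pow_dvd_pow (X : ℂ[X]) (Nat.le_succ K)
  have e3 : (X : ℂ[X]) ^ K ∣ (p - q) := (pow_dvd_pow (X : ℂ[X]) (Nat.le_succ K)).trans ⟨r, hr⟩
  have e4 : (X : ℂ[X]) ^ K ∣ (derivative p * q - p * derivative q) := by
    have key : derivative p * q - p * derivative q
        = derivative (p - q) * q - (p - q) * derivative q := by
      rw [derivative_sub]; ring
    rw [key]
    exact dvd_sub (e2.mul_right q) (e3.mul_right (derivative q))
  obtain ⟨h, hh⟩ := e4
  exact ⟨h, hh⟩



lemma far_of_nonvanishing {δ : ℝ} (p : ℂ[X]) (hp : ∀ z ∈ segN δ, p.eval z ≠ 0) :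
    ∀ ζ ∈ p.roots, Far δ ζ := fun ζ hζ t ht => roots_far p hp ζ hζ t ht

lemma eval_zero_ne {δ : ℝ} (hδ : 0 < δ) (p : ℂ[X]) (hp : ∀ z ∈ segN δ, p.eval z ≠ 0) :
    p.eval 0 ≠ 0 := by
  have h0 : ((0:ℝ) : ℂ) ∈ segN δ := mem_segN_of_mem_Icc hδ ⟨le_refl 0, zero_le_one⟩
  simpa using hp 0 (by simpa using h0)

lemma eval_eq_exp_mlog {δ : ℝ} (hδ : 0 < δ) (p : ℂ[X]) (hp : ∀ z ∈ segN δ, p.eval z ≠ 0)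
    {z : ℂ} (hz : z ∈ segN (3*δ/4)) :
    p.eval z = p.eval 0 * Complex.exp (mlog p.roots z) := by
  rw [exp_mlog hδ _ (far_of_nonvanishing p hp) hz]
  exact poly_eval_eq_prod p (eval_zero_ne hδ p hp) z

lemma deriv_eval_eq {δ : ℝ} (hδ : 0 < δ) (p : ℂ[X]) (hp : ∀ z ∈ segN δ, p.eval z ≠ 0)
    {z : ℂ} (hz : z ∈ segN (3*δ/4)) :
    (derivative p).eval z = p.eval z * msum p.roots z := by
  have hfar := far_of_nonvanishing p hp
  have f1 : HasDerivAt (fun w => p.eval w) ((derivative p).eval z) z := p.hasDerivAt z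
  have f2 : HasDerivAt (fun w => p.eval 0 * Complex.exp (mlog p.roots w))
      (p.eval 0 * (Complex.exp (mlog p.roots z) * msum p.roots z)) z :=
    ((hasDerivAt_mlog hδ _ hfar hz).cexp).const_mul _
  have hev : (fun w => p.eval w) =ᶠ[nhds z] (fun w => p.eval 0 * Complex.exp (mlog p.roots w)) :=
    Filter.eventuallyEq_of_mem ((isOpen_segN (3*δ/4)).mem_nhds hz)
      (fun w hw => eval_eq_exp_mlog hδ p hp hw)
  have f2' : HasDerivAt (fun w => p.eval w)
      (p.eval 0 * (Complex.exp (mlog p.roots z) * msum p.roots z)) z :=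
    f2.congr_of_eventuallyEq hev
  rw [f1.unique f2', ← mul_assoc, ← eval_eq_exp_mlog hδ p hp hz]

lemma msum_sub_eq {δ : ℝ} (hδ : 0 < δ) (p q : ℂ[X])
    (hp : ∀ z ∈ segN δ, p.eval z ≠ 0) (hq : ∀ z ∈ segN δ, q.eval z ≠ 0)
    {K : ℕ} {h : ℂ[X]} (hpq : derivative p * q - p * derivative q = X ^ K * h)
    {z : ℂ} (hz : z ∈ segN (3*δ/4)) :
    msum p.roots z - msum q.roots z = z ^ K * (h.eval z / (p.eval z * q.eval z)) := by
  have hz' : z ∈ segN δ := segN_mono (by linarith) hz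
  have hpz : p.eval z ≠ 0 := hp z hz'
  have hqz : q.eval z ≠ 0 := hq z hz'
  have h1 := deriv_eval_eq hδ p hp hz
  have h2 := deriv_eval_eq hδ q hq hz
  have h3 : (derivative p).eval z * q.eval z - p.eval z * (derivative q).eval z
      = z ^ K * h.eval z := by
    have := congrArg (fun r : ℂ[X] => r.eval z) hpq
    simpa using this
  rw [h1, h2] at h3
  field_simp
  linear_combination h3



lemma circle_avg_le {g : ℂ → ℂ} {a : ℂ} {r C : ℝ} (hr : 0 < r)
    (hc : ContinuousOn g (Metric.sphere a r)) (hC : ∀ z ∈ Metric.sphere a r, ‖g z‖ ≤ C) :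
    (2 * Real.pi)⁻¹ * ∫ θ in (0:ℝ)..2 * Real.pi, ‖g (circleMap a r θ)‖ ≤ C := by
  have hmaps : ∀ θ : ℝ, circleMap a r θ ∈ Metric.sphere a r := fun θ =>
    circleMap_mem_sphere a hr.le θ
  have hcont : Continuous fun θ : ℝ => ‖g (circleMap a r θ)‖ := by
    rw [← continuousOn_univ]
    exact ((hc.comp (continuous_circleMap a r).continuousOn
      (fun θ _ => hmaps θ)).norm).mono (Set.subset_univ _)
  have hCnn : 0 ≤ C := le_trans (norm_nonneg _) (hC _ (hmaps 0))
  have hint : ∫ θ in (0:ℝ)..2 * Real.pi, ‖g (circleMap a r θ)‖ ≤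
      ∫ _ in (0:ℝ)..2 * Real.pi, C := by
    apply intervalIntegral.integral_mono_on Real.two_pi_pos.le
      (hcont.intervalIntegrable _ _) (intervalIntegrable_const)
    exact fun θ _ => hC _ (hmaps θ)
  rw [intervalIntegral.integral_const, smul_eq_mul] at hint
  calc (2 * Real.pi)⁻¹ * ∫ θ in (0:ℝ)..2 * Real.pi, ‖g (circleMap a r θ)‖
      ≤ (2 * Real.pi)⁻¹ * ((2 * Real.pi - 0) * C) := by
        apply mul_le_mul_of_nonneg_left hint
        positivity
    _ = C := by
        field_simp
        ring

lemma cauchy_step {g : ℂ → ℂ} {a : ℂ} {ρ m M : ℝ} (hρ : 0 < ρ) (hm : 0 ≤ m) (hM : 0 ≤ M)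
    (hd : DifferentiableOn ℂ g (Metric.closedBall a (8 * ρ)))
    (hsmall : ∀ z ∈ Metric.closedBall a ρ, ‖g z‖ ≤ m)
    (hbig : ∀ z ∈ Metric.closedBall a (8 * ρ), ‖g z‖ ≤ M)
    {z : ℂ} (hz : z ∈ Metric.closedBall a (3/2 * ρ)) :
    ‖g z‖ ≤ 3 * Real.sqrt (m * M) := by
  set ρ1 : NNReal := ⟨ρ, hρ.le⟩ with hρ1
  set ρ2 : NNReal := ⟨8 * ρ, by positivity⟩ with hρ2
  have hc1 : (ρ1 : ℝ) = ρ := rfl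
  have hc2 : (ρ2 : ℝ) = 8 * ρ := rfl
  have hsub : Metric.closedBall a (ρ1 : ℝ) ⊆ Metric.closedBall a (8 * ρ) :=
    Metric.closedBall_subset_closedBall (by rw [hc1]; linarith)
  have hps1 : HasFPowerSeriesOnBall g (cauchyPowerSeries g a ρ1) a ρ1 :=
    (hd.mono hsub).hasFPowerSeriesOnBall (by exact_mod_cast hρ)
  have hps2 : HasFPowerSeriesOnBall g (cauchyPowerSeries g a ρ2) a ρ2 :=
    (hd.mono (by rw [hc2])).hasFPowerSeriesOnBall (by rw [← NNReal.coe_pos, hc2]; positivity)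
  have hEq : cauchyPowerSeries g a ρ1 = cauchyPowerSeries g a ρ2 :=
    hps1.hasFPowerSeriesAt.eq_formalMultilinearSeries hps2.hasFPowerSeriesAt
  -- coefficient bounds
  have hb1 : ∀ k, ‖cauchyPowerSeries g a ρ1 k‖ ≤ m * (ρ⁻¹) ^ k := by
    intro k
    refine le_trans (norm_cauchyPowerSeries_le g a ρ1 k) ?_
    rw [hc1, abs_of_pos hρ]
    apply mul_le_mul_of_nonneg_right _ (by positivity)
    apply circle_avg_le hρ (hd.continuousOn.mono
      ((Metric.sphere_subset_closedBall).trans hsub))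
    exact fun w hw => hsmall w (Metric.sphere_subset_closedBall.trans
      (Metric.closedBall_subset_closedBall (le_refl ρ)) hw)
  have hb2 : ∀ k, ‖cauchyPowerSeries g a ρ2 k‖ ≤ M * ((8 * ρ)⁻¹) ^ k := by
    intro k
    refine le_trans (norm_cauchyPowerSeries_le g a ρ2 k) ?_
    rw [hc2, abs_of_pos (by positivity : (0:ℝ) < 8 * ρ)]
    apply mul_le_mul_of_nonneg_right _ (by positivity)
    apply circle_avg_le (by positivity) (hd.continuousOn.mono
      (by rw [← hc2] at *; exact Metric.sphere_subset_closedBall))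
    exact fun w hw => hbig w (Metric.sphere_subset_closedBall hw)
  -- evaluate the series at y
  set y : ℂ := z - a with hy
  have hyn : ‖y‖ ≤ 3/2 * ρ := by
    rw [hy, ← dist_eq_norm]
    exact Metric.mem_closedBall.1 hz
  have hmem : y ∈ Metric.eball (0:ℂ) ρ2 := by
    rw [Metric.mem_eball, edist_zero_right]
    have : ‖y‖ < (8 * ρ) := lt_of_le_of_lt hyn (by linarith)
    rw [← hc2] at this
    exact_mod_cast this
  have hsum : HasSum (fun k => (cauchyPowerSeries g a ρ2 k) (fun _ => y)) (g (a + y)) :=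
    hps2.hasSum hmem
  set sw : ℝ := Real.sqrt (9/32) with hsw
  have hsw0 : 0 ≤ sw := Real.sqrt_nonneg _
  have hsw1 : sw ≤ 2/3 := by
    rw [hsw, show (2:ℝ)/3 = Real.sqrt ((2/3)^2) from (Real.sqrt_sq (by norm_num)).symm]
    exact Real.sqrt_le_sqrt (by norm_num)
  have hterm : ∀ k, ‖(cauchyPowerSeries g a ρ2 k) (fun _ => y)‖ ≤
      Real.sqrt (m * M) * sw ^ k := by
    intro k
    have t1 : ‖(cauchyPowerSeries g a ρ2 k) (fun _ => y)‖ ≤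
        ‖cauchyPowerSeries g a ρ2 k‖ * ‖y‖ ^ k := by
      refine le_trans (ContinuousMultilinearMap.le_opNorm _ _) ?_
      simp
    have hyk : ‖y‖ ^ k ≤ (3/2 * ρ) ^ k := pow_le_pow_left₀ (norm_nonneg _) hyn k
    have hsq : (‖(cauchyPowerSeries g a ρ2 k) (fun _ => y)‖) ^ 2 ≤
        (m * M) * ((9/32) ^ k) := by
      have e1 : ‖(cauchyPowerSeries g a ρ2 k) (fun _ => y)‖ ≤ m * (ρ⁻¹) ^ k * ‖y‖ ^ k := by
        refine le_trans t1 (mul_le_mul_of_nonneg_right ?_ (by positivity))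
        rw [← hEq]; exact hb1 k
      have e2 : ‖(cauchyPowerSeries g a ρ2 k) (fun _ => y)‖ ≤ M * ((8*ρ)⁻¹) ^ k * ‖y‖ ^ k :=
        le_trans t1 (mul_le_mul_of_nonneg_right (hb2 k) (by positivity))
      have nn : (0:ℝ) ≤ ‖(cauchyPowerSeries g a ρ2 k) (fun _ => y)‖ := norm_nonneg _
      calc (‖(cauchyPowerSeries g a ρ2 k) (fun _ => y)‖) ^ 2
          ≤ (m * (ρ⁻¹) ^ k * ‖y‖ ^ k) * (M * ((8*ρ)⁻¹) ^ k * ‖y‖ ^ k) := by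
            rw [sq]
            exact mul_le_mul e1 e2 nn (by positivity)
        _ = (m * M) * ((ρ⁻¹ * (8*ρ)⁻¹ * ‖y‖^2) ^ k) := by
            rw [mul_pow, mul_pow, sq, mul_pow]
            ring
        _ ≤ (m * M) * ((9/32) ^ k) := by
            apply mul_le_mul_of_nonneg_left _ (by positivity)
            apply pow_le_pow_left₀ (by positivity)
            have hyy : ‖y‖^2 ≤ (3/2*ρ)^2 := by
              apply sq_le_sq' _ hyn
              nlinarith [norm_nonneg y]
            calc ρ⁻¹ * (8*ρ)⁻¹ * ‖y‖^2 ≤ ρ⁻¹ * (8*ρ)⁻¹ * (3/2*ρ)^2 := by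
                  apply mul_le_mul_of_nonneg_left hyy (by positivity)
              _ = 9/32 := by field_simp; ring
    calc ‖(cauchyPowerSeries g a ρ2 k) (fun _ => y)‖
        = Real.sqrt ((‖(cauchyPowerSeries g a ρ2 k) (fun _ => y)‖) ^ 2) :=
          (Real.sqrt_sq (norm_nonneg _)).symm
      _ ≤ Real.sqrt ((m * M) * ((9/32) ^ k)) := Real.sqrt_le_sqrt hsq
      _ = Real.sqrt (m * M) * sw ^ k := by
          have h932 : ((9:ℝ)/32) ^ k = (sw ^ k) ^ 2 := by
            rw [← pow_mul, mul_comm k 2, pow_mul, hsw, Real.sq_sqrt (by norm_num)]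
          rw [h932, Real.sqrt_mul (by positivity), Real.sqrt_sq (by positivity)]
  -- now sum up
  have hgeo : Summable (fun k : ℕ => Real.sqrt (m * M) * sw ^ k) :=
    (summable_geometric_of_lt_one hsw0 (by linarith)).mul_left _
  have hsn : Summable (fun k => ‖(cauchyPowerSeries g a ρ2 k) (fun _ => y)‖) :=
    Summable.of_nonneg_of_le (fun k => norm_nonneg _) hterm hgeo
  have hzy : z = a + y := by rw [hy]; ring
  calc ‖g z‖ = ‖g (a + y)‖ := by rw [← hzy]
    _ = ‖∑' k, (cauchyPowerSeries g a ρ2 k) (fun _ => y)‖ := by rw [hsum.tsum_eq]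
    _ ≤ ∑' k, ‖(cauchyPowerSeries g a ρ2 k) (fun _ => y)‖ := norm_tsum_le_tsum_norm hsn
    _ ≤ ∑' k, Real.sqrt (m * M) * sw ^ k := Summable.tsum_le_tsum hterm hsn hgeo
    _ = Real.sqrt (m * M) * (1 - sw)⁻¹ := by
        rw [tsum_mul_left, tsum_geometric_of_lt_one hsw0 (by linarith)]
    _ ≤ 3 * Real.sqrt (m * M) := by
        rw [mul_comm]
        apply mul_le_mul_of_nonneg_right _ (Real.sqrt_nonneg _)
        rw [inv_le_comm₀ (by linarith) (by norm_num)]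
        linarith


theorem main_est {δ : ℝ} (hδ0 : 0 < δ) (hδ1 : δ < 1) {n K : ℕ} (hn : 1 ≤ n)
    {p q : Polynomial ℂ} (hpd : p.natDegree ≤ n) (hqd : q.natDegree ≤ n)
    (hp : ∀ z ∈ segN δ, p.eval z ≠ 0) (hq : ∀ z ∈ segN δ, q.eval z ≠ 0)
    (hco : ∀ k ≤ K, p.coeff k = q.coeff k) :
    ∃ w : ℂ, Complex.exp w = p.eval 1 / q.eval 1 ∧
      ‖w‖ ≤ 9 * (16 * n / δ) *
        (((4:ℝ)⁻¹ ^ K / 9) ^ ((1/2:ℝ) ^ (Nat.ceil (32/δ)) : ℝ)) := by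
  have h34 : (0:ℝ) < 3*δ/4 := by linarith
  set g : ℂ → ℂ := fun z => mlog p.roots z - mlog q.roots z with hgdef
  set S : ℂ → ℂ := fun z => msum p.roots z - msum q.roots z with hSdef
  set M : ℝ := 16 * n / δ with hMdef
  have hn' : (1:ℝ) ≤ n := by exact_mod_cast hn
  have hM0 : 0 < M := by rw [hMdef]; positivity
  have hfp := far_of_nonvanishing p hp
  have hfq := far_of_nonvanishing q hq
  -- derivative of g
  have hdg : ∀ z ∈ segN (3*δ/4), HasDerivAt g (S z) z := fun z hz =>
    (hasDerivAt_mlog hδ0 _ hfp hz).sub (hasDerivAt_mlog hδ0 _ hfq hz)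
  have hdiff : DifferentiableOn ℂ g (segN (3*δ/4)) := fun z hz =>
    (hdg z hz).differentiableAt.differentiableWithinAt
  -- bound on S
  have hSb : ∀ z ∈ segN (3*δ/4), ‖S z‖ ≤ 8 * n / δ := by
    intro z hz
    have b1 : ‖msum p.roots z‖ ≤ (Multiset.card p.roots : ℝ) * (4/δ) :=
      norm_msum_le hδ0 _ hfp hz
    have b2 : ‖msum q.roots z‖ ≤ (Multiset.card q.roots : ℝ) * (4/δ) :=
      norm_msum_le hδ0 _ hfq hz
    have c1 : (Multiset.card p.roots : ℝ) ≤ n := by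
      exact_mod_cast le_trans (Polynomial.card_roots' p) hpd
    have c2 : (Multiset.card q.roots : ℝ) ≤ n := by
      exact_mod_cast le_trans (Polynomial.card_roots' q) hqd
    have e1 : (Multiset.card p.roots : ℝ) * (4/δ) ≤ n * (4/δ) := by
      apply mul_le_mul_of_nonneg_right c1 (by positivity)
    have e2 : (Multiset.card q.roots : ℝ) * (4/δ) ≤ n * (4/δ) := by
      apply mul_le_mul_of_nonneg_right c2 (by positivity)
    calc ‖S z‖ ≤ ‖msum p.roots z‖ + ‖msum q.roots z‖ := by
          simpa [hSdef] using norm_sub_le (msum p.roots z) (msum q.roots z)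
      _ ≤ n * (4/δ) + n * (4/δ) := by linarith
      _ = 8 * n / δ := by ring
  have h0mem : (0:ℂ) ∈ segN (3*δ/4) := by
    have := mem_segN_of_mem_Icc h34 (⟨le_refl (0:ℝ), zero_le_one⟩ : (0:ℝ) ∈ Set.Icc (0:ℝ) 1)
    simpa using this
  have hg0 : g 0 = 0 := by simp [hgdef, mlog_zero]
  -- global bound on g
  have hM : ∀ z ∈ segN (3*δ/4), ‖g z‖ ≤ M := by
    intro z hz
    have key : ‖g z - g 0‖ ≤ (8*n/δ) * ‖z - 0‖ :=
      (convex_segN (3*δ/4)).norm_image_sub_le_of_norm_hasDerivWithin_le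
        (fun w hw => (hdg w hw).hasDerivWithinAt) hSb h0mem hz
    rw [hg0, sub_zero, sub_zero] at key
    have hzn : ‖z‖ ≤ 2 := by
      have := norm_le_of_mem_segN hz
      calc ‖z‖ ≤ 1 + 3*δ/4 := this
        _ ≤ 2 := by linarith
    calc ‖g z‖ ≤ (8*n/δ) * ‖z‖ := key
      _ ≤ (8*n/δ) * 2 := by
          apply mul_le_mul_of_nonneg_left hzn (by positivity)
      _ = M := by rw [hMdef]; ring
  -- exp g = p/q
  have hpq0 : p.eval 0 = q.eval 0 := by
    rw [← Polynomial.coeff_zero_eq_eval_zero, ← Polynomial.coeff_zero_eq_eval_zero]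
    exact hco 0 (Nat.zero_le K)
  have hgexp : ∀ z ∈ segN (3*δ/4), Complex.exp (g z) = p.eval z / q.eval z := by
    intro z hz
    have hz' : z ∈ segN δ := segN_mono (by linarith) hz
    have e1 := eval_eq_exp_mlog hδ0 p hp hz
    have e2 := eval_eq_exp_mlog hδ0 q hq hz
    have hp0 := eval_zero_ne hδ0 p hp
    have hq0 := eval_zero_ne hδ0 q hq
    have hqz := hq z hz'
    rw [hgdef]
    simp only [Complex.exp_sub]
    rw [show Complex.exp (mlog p.roots z) = p.eval z / p.eval 0 by
        rw [e1]; field_simp,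
      show Complex.exp (mlog q.roots z) = q.eval z / q.eval 0 by
        rw [e2]; field_simp]
    rw [hpq0]
    field_simp
  -- the rational function u
  obtain ⟨h, hh⟩ := exists_X_pow_dvd p q K hco
  set u : ℂ → ℂ := fun z => h.eval z / (p.eval z * q.eval z) with hudef
  have hSu : ∀ z ∈ segN (3*δ/4), S z = z ^ K * u z := fun z hz =>
    msum_sub_eq hδ0 p q hp hq hh hz
  have hball_sub : Metric.closedBall (0:ℂ) (δ/4) ⊆ segN (3*δ/4) := by
    have := closedBall_subset_segN (show δ/4 < 3*δ/4 by linarith)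
      (⟨le_refl (0:ℝ), zero_le_one⟩ : (0:ℝ) ∈ Set.Icc (0:ℝ) 1)
    simpa using this
  have hu_diff : DifferentiableOn ℂ u (Metric.closedBall (0:ℂ) (δ/4)) := by
    intro z hz
    have hz' : z ∈ segN δ := segN_mono (by linarith) (hball_sub hz)
    exact ((h.differentiableAt).div
      ((p.differentiableAt).mul (q.differentiableAt))
      (mul_ne_zero (hp z hz') (hq z hz'))).differentiableWithinAt
  -- max modulus for u
  set Cu : ℝ := (8*n/δ) * (4/δ) ^ K with hCu
  have husphere : ∀ w ∈ Metric.sphere (0:ℂ) (δ/4), ‖u w‖ ≤ Cu := by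
    intro w hw
    have hwn : ‖w‖ = δ/4 := by simpa using hw
    have hwseg : w ∈ segN (3*δ/4) := hball_sub (Metric.sphere_subset_closedBall hw)
    have hw0 : w ≠ 0 := by
      intro h0; rw [h0] at hwn; simp at hwn; linarith
    have hSw := hSu w hwseg
    have huw : u w = S w / w ^ K := by
      rw [hSw]; field_simp
    rw [huw]
    rw [norm_div, norm_pow, hwn]
    rw [div_le_iff₀ (by positivity)]
    have hprod : Cu * (δ/4) ^ K = 8*n/δ := by
      rw [hCu, mul_assoc, ← mul_pow, show (4/δ)*(δ/4) = (1:ℝ) from by field_simp, one_pow,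
        mul_one]
    rw [hprod]
    exact hSb w hwseg
  have humax : ∀ w ∈ Metric.closedBall (0:ℂ) (δ/4), ‖u w‖ ≤ Cu := by
    intro w hw
    have hne : (δ/4 : ℝ) ≠ 0 := by positivity
    exact Complex.norm_le_of_forall_mem_frontier_norm_le Metric.isBounded_ball
      (DifferentiableOn.diffContOnCl (by rwa [closure_ball (0:ℂ) hne]))
      (fun x hx => husphere x (by rwa [frontier_ball (0:ℂ) hne] at hx))
      (by rwa [closure_ball (0:ℂ) hne])
  -- smallness of S near 0
  have hcb16 : Metric.closedBall (0:ℂ) (δ/16) ⊆ Metric.closedBall (0:ℂ) (δ/4) :=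
    Metric.closedBall_subset_closedBall (by linarith)
  have hSsmall : ∀ w ∈ Metric.closedBall (0:ℂ) (δ/16), ‖S w‖ ≤ (8*n/δ) * (4:ℝ)⁻¹ ^ K := by
    intro w hw
    have hwseg : w ∈ segN (3*δ/4) := hball_sub (hcb16 hw)
    have hwn : ‖w‖ ≤ δ/16 := by
      rw [← dist_zero_right]
      exact Metric.mem_closedBall.1 hw
    rw [hSu w hwseg, norm_mul, norm_pow]
    calc ‖w‖ ^ K * ‖u w‖ ≤ (δ/16) ^ K * Cu := by
          apply mul_le_mul (pow_le_pow_left₀ (norm_nonneg _) hwn K)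
            (humax w (hcb16 hw)) (norm_nonneg _) (by positivity)
      _ = (8*n/δ) * (4:ℝ)⁻¹ ^ K := by
          rw [hCu, mul_comm ((8*↑n/δ)) ((4/δ:ℝ)^K), ← mul_assoc, ← mul_pow,
            show (δ/16) * (4/δ) = (4:ℝ)⁻¹ from by field_simp; ring]
          ring
  -- smallness of g near 0
  set γ : ℝ := (4:ℝ)⁻¹ ^ K / 9 with hγdef
  have hγ0 : 0 < γ := by rw [hγdef]; positivity
  have hγ1 : γ ≤ 1 := by
    rw [hγdef]
    have : (4:ℝ)⁻¹ ^ K ≤ 1 := pow_le_one₀ (by norm_num) (by norm_num)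
    linarith
  have hgsmall : ∀ z ∈ Metric.closedBall (0:ℂ) (δ/16), ‖g z‖ ≤ 9 * M * γ := by
    intro z hz
    have key : ‖g z - g 0‖ ≤ ((8*n/δ) * (4:ℝ)⁻¹ ^ K) * ‖z - 0‖ :=
      (convex_closedBall (0:ℂ) (δ/16)).norm_image_sub_le_of_norm_hasDerivWithin_le
        (fun w hw => (hdg w (hball_sub (hcb16 hw))).hasDerivWithinAt) hSsmall
        (Metric.mem_closedBall_self (by positivity)) hz
    rw [hg0, sub_zero, sub_zero] at key
    have hzn : ‖z‖ ≤ δ/16 := by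
      rw [← dist_zero_right]; exact Metric.mem_closedBall.1 hz
    have e9 : 9 * M * γ = M * (4:ℝ)⁻¹ ^ K := by rw [hγdef]; ring
    rw [e9]
    calc ‖g z‖ ≤ ((8*n/δ) * (4:ℝ)⁻¹ ^ K) * ‖z‖ := key
      _ ≤ ((8*n/δ) * (4:ℝ)⁻¹ ^ K) * (δ/16) := by
          apply mul_le_mul_of_nonneg_left hzn (by positivity)
      _ = (n/2) * (4:ℝ)⁻¹ ^ K := by field_simp; ring
      _ ≤ M * (4:ℝ)⁻¹ ^ K := by
          apply mul_le_mul_of_nonneg_right _ (by positivity)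
          rw [hMdef]
          rw [div_le_div_iff₀ (by norm_num) hδ0]
          nlinarith
  -- the chain of disks
  set T : ℕ := Nat.ceil ((32:ℝ)/δ) with hTdef
  have hT0 : 0 < T := Nat.ceil_pos.2 (by positivity)
  have hT0' : (0:ℝ) < T := by exact_mod_cast hT0
  have hTge : (32:ℝ)/δ ≤ T := Nat.le_ceil _
  have hstep : (1:ℝ)/T ≤ δ/32 := by
    rw [div_le_iff₀ hT0']
    rw [div_le_iff₀ hδ0] at hTge
    nlinarith
  have claim : ∀ j : ℕ, j ≤ T →
      ∀ z ∈ Metric.closedBall (((j:ℝ)/(T:ℝ) : ℝ) : ℂ) (δ/16),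
        ‖g z‖ ≤ 9 * M * γ ^ (((1/2:ℝ) ^ j : ℝ)) := by
    intro j
    induction j with
    | zero =>
      intro _ z hz
      have e0 : (((0:ℕ):ℝ)/(T:ℝ) : ℝ) = 0 := by simp
      rw [e0] at hz
      simp only [pow_zero, Real.rpow_one]
      exact hgsmall z (by simpa using hz)
    | succ j ih =>
      intro hj z hz
      have hj' : j ≤ T := le_trans (Nat.le_succ j) hj
      have hjI : ((j:ℝ)/(T:ℝ)) ∈ Set.Icc (0:ℝ) 1 := by
        constructor
        · positivity
        · rw [div_le_one hT0']
          exact_mod_cast hj'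
      have hsub8 : Metric.closedBall ((((j:ℝ)/(T:ℝ)) : ℝ) : ℂ) (8 * (δ/16)) ⊆ segN (3*δ/4) := by
        have h8 : 8 * (δ/16) = δ/2 := by ring
        rw [h8]
        exact closedBall_subset_segN (by linarith) hjI
      have hzin : z ∈ Metric.closedBall ((((j:ℝ)/(T:ℝ)) : ℝ) : ℂ) (3/2 * (δ/16)) := by
        rw [Metric.mem_closedBall] at hz ⊢
        have hd : dist ((((j+1:ℕ):ℝ)/(T:ℝ) : ℝ) : ℂ) ((((j:ℝ)/(T:ℝ)) : ℝ) : ℂ) = 1/(T:ℝ) := by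
          rw [Complex.dist_eq]
          have : ((((j+1:ℕ):ℝ)/(T:ℝ) : ℝ) : ℂ) - ((((j:ℝ)/(T:ℝ)) : ℝ) : ℂ)
              = (((1:ℝ)/(T:ℝ) : ℝ) : ℂ) := by
            push_cast
            rw [div_sub_div_same]
            congr 1
            ring
          rw [this, Complex.norm_real, Real.norm_eq_abs, _root_.abs_of_nonneg (by positivity)]
        calc dist z ((((j:ℝ)/(T:ℝ)) : ℝ) : ℂ)
            ≤ dist z ((((j+1:ℕ):ℝ)/(T:ℝ) : ℝ) : ℂ)
              + dist ((((j+1:ℕ):ℝ)/(T:ℝ) : ℝ) : ℂ) ((((j:ℝ)/(T:ℝ)) : ℝ) : ℂ) :=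
              dist_triangle _ _ _
          _ ≤ δ/16 + 1/(T:ℝ) := by rw [hd]; exact add_le_add_left hz _
          _ ≤ 3/2 * (δ/16) := by
              have := hstep
              linarith
      have hcs := cauchy_step (g := g) (a := ((((j:ℝ)/(T:ℝ)) : ℝ) : ℂ)) (ρ := δ/16)
        (m := 9 * M * γ ^ (((1/2:ℝ) ^ j : ℝ))) (M := M)
        (by positivity) (by positivity) hM0.le
        (hdiff.mono hsub8)
        (ih hj')
        (fun w hw => hM w (hsub8 hw))
        hzin
      refine le_trans hcs ?_
      have e1 : 9 * M * γ ^ (((1/2:ℝ) ^ j : ℝ)) * M = (3*M)^2 * γ ^ (((1/2:ℝ) ^ j : ℝ)) := by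
        ring
      rw [e1, Real.sqrt_mul (by positivity), Real.sqrt_sq (by positivity)]
      rw [Real.sqrt_eq_rpow, ← Real.rpow_mul hγ0.le]
      rw [show ((1/2:ℝ)^j) * (1/2) = (1/2:ℝ)^(j+1) from (pow_succ (1/2:ℝ) j).symm]
      apply le_of_eq
      ring
  -- conclusion
  have h1mem : (1:ℂ) ∈ Metric.closedBall (((T:ℝ)/(T:ℝ) : ℝ) : ℂ) (δ/16) := by
    rw [div_self hT0'.ne', Complex.ofReal_one]
    exact Metric.mem_closedBall_self (by positivity)
  have h1seg : (1:ℂ) ∈ segN (3*δ/4) := by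
    refine ⟨1, ⟨zero_le_one, le_refl 1⟩, ?_⟩
    simp only [Complex.ofReal_one, sub_self, norm_zero]
    linarith
  refine ⟨g 1, hgexp 1 h1seg, ?_⟩
  have := claim T (le_refl T) 1 h1mem
  simpa using this


lemma numeric_final (δ ε : ℝ) (n : ℕ) (hδ0 : 0 < δ) (hδ1 : δ < 1) (hε0 : 0 < ε)
    (hε1 : ε < 1) (hn : 1 ≤ n) :
    9 * (16 * n / δ) *
      (((4:ℝ)⁻¹ ^ (Nat.floor (Real.exp (30/δ) * Real.log (n * Real.exp (30/δ) / ε))) / 9) ^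
        ((1/2:ℝ) ^ (Nat.ceil ((32:ℝ)/δ)) : ℝ)) ≤ ε := by
  set D : ℝ := 1/δ with hD
  have hD1 : 1 ≤ D := by rw [hD]; rw [le_div_iff₀ hδ0]; linarith
  have hD0 : 0 < D := by linarith
  have hn' : (1:ℝ) ≤ n := by exact_mod_cast hn
  set B : ℝ := Real.exp (30/δ) * Real.log (n * Real.exp (30/δ) / ε) with hB
  set K : ℕ := Nat.floor B with hK
  set T : ℕ := Nat.ceil ((32:ℝ)/δ) with hT
  set t : ℝ := (1/2:ℝ) ^ T with ht
  have ht0 : 0 < t := by positivity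
  have ht1 : t ≤ 1 := pow_le_one₀ (by norm_num) (by norm_num)
  -- log of the argument
  have hlogn : 0 ≤ Real.log n := Real.log_nonneg hn'
  have hlogε : Real.log ε < 0 := Real.log_neg hε0 hε1
  set A : ℝ := Real.log n - Real.log ε with hA
  have hA0 : 0 ≤ A := by rw [hA]; linarith
  have hBval : B = Real.exp (30 * D) * (A + 30 * D) := by
    rw [hB, hA]
    have h30 : 30 / δ = 30 * D := by rw [hD]; ring
    rw [h30]
    congr 1
    rw [Real.log_div (by positivity) hε0.ne', Real.log_mul (by positivity) (by positivity),
      Real.log_exp]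
    ring
  -- B - 1 ≥ exp(23 D) * (A + 7 D)
  have hexp7 : Real.exp (7 * D) ≥ 1 + 7 * D := by
    have := Real.add_one_le_exp (7 * D)
    linarith
  have hexp23 : (1:ℝ) ≤ Real.exp (23 * D) := Real.one_le_exp (by linarith)
  have hsplit : Real.exp (30 * D) = Real.exp (23 * D) * Real.exp (7 * D) := by
    rw [← Real.exp_add]; ring_nf
  have hBlow : Real.exp (23 * D) * (A + 7 * D) + 1 ≤ B := by
    rw [hBval, hsplit]
    have key : Real.exp (7 * D) * (A + 30 * D) ≥ (A + 7 * D) + 23 * D := by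
      nlinarith [Real.exp_pos (7*D)]
    nlinarith [Real.exp_pos (23*D)]
  -- bound on log(144 n / (δ ε))
  have hlog144 : Real.log 144 ≤ 6 := by
    have h1 : Real.log 144 ≤ Real.log 256 :=
      Real.log_le_log (by norm_num) (by norm_num)
    have h2 : Real.log 256 = 8 * Real.log 2 := by
      rw [show (256:ℝ) = 2 ^ (8:ℕ) by norm_num, Real.log_pow]
      push_cast; ring
    have := Real.log_two_lt_d9
    nlinarith
  have hlogδ : Real.log (1/δ) ≤ D - 1 := by
    have := Real.log_le_sub_one_of_pos (show (0:ℝ) < 1/δ by positivity)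
    rw [← hD] at this
    linarith
  have hRHS : Real.log (144 * n / (δ * ε)) ≤ A + 7 * D := by
    have e1 : Real.log (144 * n / (δ * ε))
        = Real.log 144 + Real.log n + Real.log (1/δ) - Real.log ε := by
      rw [Real.log_div (by positivity) (by positivity),
        Real.log_mul (by norm_num) (by positivity),
        Real.log_mul hδ0.ne' hε0.ne', Real.log_div one_ne_zero hδ0.ne']
      simp [Real.log_one]
      ring
    rw [e1, hA]
    have h6D : (6:ℝ) ≤ 6 * D := by linarith
    linarith
  -- t ≥ exp (-(23 D))
  have hTle : (T:ℝ) ≤ 33 * D := by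
    have h1 : (T:ℝ) < 32/δ + 1 := Nat.ceil_lt_add_one (by positivity)
    have h2 : 32/δ = 32 * D := by rw [hD]; ring
    rw [h2] at h1
    linarith
  have htlow : Real.exp (-(23 * D)) ≤ t := by
    have e1 : t = Real.exp (Real.log (1/2) * T) := by
      rw [ht, ← Real.rpow_natCast (1/2:ℝ) T, Real.rpow_def_of_pos (by norm_num)]
    rw [e1]
    apply Real.exp_le_exp.2
    have hl2 : Real.log (1/2) = -Real.log 2 := by
      rw [one_div, Real.log_inv]
    rw [hl2]
    have hd9 := Real.log_two_lt_d9
    have hl2pos := Real.log_pos (by norm_num : (1:ℝ) < 2)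
    have hTnn : (0:ℝ) ≤ (T:ℝ) := Nat.cast_nonneg T
    nlinarith
  -- K * t is large
  have hKB : B - 1 ≤ (K:ℝ) := by
    have := Nat.lt_floor_add_one B
    rw [← hK] at this
    linarith
  have hK0 : (0:ℝ) ≤ (K:ℝ) := Nat.cast_nonneg K
  have hKt : A + 7*D ≤ (K:ℝ) * t := by
    have h1 : Real.exp (23*D) * (A + 7*D) ≤ B - 1 := by linarith
    calc A + 7*D = (Real.exp (23*D) * (A+7*D)) * Real.exp (-(23*D)) := by
          rw [Real.exp_neg]
          field_simp
      _ ≤ (B-1) * Real.exp (-(23*D)) :=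
          mul_le_mul_of_nonneg_right h1 (Real.exp_pos _).le
      _ ≤ (K:ℝ) * t := by
          apply mul_le_mul hKB htlow (Real.exp_pos _).le hK0
  have hKtnn : (0:ℝ) ≤ (K:ℝ) * t := by positivity
  have hlog4 : 1 ≤ Real.log 4 := by
    have h2 : Real.log 4 = 2 * Real.log 2 := by
      rw [show (4:ℝ) = 2 ^ (2:ℕ) by norm_num, Real.log_pow]
      push_cast; ring
    have := Real.log_two_gt_d9
    linarith
  set R : ℝ := 144*n/(δ*ε) with hR
  have hR0 : 0 < R := by rw [hR]; positivity
  have hKt4 : Real.log R ≤ (K:ℝ)*t*Real.log 4 := by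
    have h1 : Real.log R ≤ A + 7*D := hRHS
    have h2 : (K:ℝ)*t ≤ (K:ℝ)*t*Real.log 4 := le_mul_of_one_le_right hKtnn hlog4
    linarith
  have hγt : (((4:ℝ)⁻¹ ^ K / 9) : ℝ) ^ (t:ℝ) ≤ Real.exp (-((K:ℝ)*t*Real.log 4)) := by
    have b1 : (((4:ℝ)⁻¹ ^ K / 9) : ℝ) ^ (t:ℝ) ≤ (((4:ℝ)⁻¹ ^ K) : ℝ) ^ (t:ℝ) :=
      Real.rpow_le_rpow (by positivity) (div_le_self (by positivity) (by norm_num)) ht0.le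
    have b2 : ((4:ℝ)⁻¹ ^ K : ℝ) = Real.exp (-(Real.log 4 * K)) := by
      rw [← Real.rpow_natCast (4⁻¹:ℝ) K, Real.rpow_def_of_pos (by norm_num), Real.log_inv]
      ring_nf
    have b3 : (Real.exp (-(Real.log 4 * K))) ^ (t:ℝ) = Real.exp (-(Real.log 4 * K) * t) := by
      rw [Real.rpow_def_of_pos (Real.exp_pos _), Real.log_exp]
    calc (((4:ℝ)⁻¹ ^ K / 9) : ℝ) ^ (t:ℝ) ≤ (((4:ℝ)⁻¹ ^ K) : ℝ) ^ (t:ℝ) := b1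
      _ = Real.exp (-(Real.log 4 * K) * t) := by rw [b2, b3]
      _ = Real.exp (-((K:ℝ)*t*Real.log 4)) := by ring_nf
  have hfin : Real.exp (-((K:ℝ)*t*Real.log 4)) ≤ δ*ε/(144*n) := by
    have h1 : Real.exp (-((K:ℝ)*t*Real.log 4)) ≤ Real.exp (-Real.log R) :=
      Real.exp_le_exp.2 (by linarith)
    have h3 : Real.exp (-Real.log R) = R⁻¹ := by
      rw [Real.exp_neg, Real.exp_log hR0]
    rw [h3] at h1
    have h2 : R⁻¹ = δ*ε/(144*n) := by
      rw [hR, inv_div]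
    rw [h2] at h1
    exact h1
  calc 9 * (16 * n / δ) * ((((4:ℝ)⁻¹ ^ K / 9) : ℝ) ^ (t:ℝ))
      ≤ 9 * (16 * n / δ) * (δ*ε/(144*n)) := by
        apply mul_le_mul_of_nonneg_left (le_trans hγt hfin) (by positivity)
    _ = ε := by
        field_simp
        ring


/-- Theorem 1.6 (two-polynomial form): if `p` and `q` are nonvanishing on the open
`δ`-neighborhood of the segment `[0,1] ⊆ ℂ` and agree on all coefficients of index
`k ≤ e^{c/δ}·ln(n·e^{c/δ}/ε)`, then `p(1)/q(1)` is `e^w` for some `w` with `|w| ≤ ε`. -/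
theorem stmt5 :
    ∃ c : ℝ, 0 < c ∧
      ∀ (δ ε : ℝ) (n : ℕ) (p q : Polynomial ℂ),
        0 < δ → δ < 1 → 0 < ε → ε < 1 → 1 ≤ n →
        p.natDegree ≤ n → q.natDegree ≤ n →
        (∀ z : ℂ, (∃ t : ℝ, t ∈ Set.Icc (0 : ℝ) 1 ∧ ‖z - t‖ < δ) →
          p.eval z ≠ 0) →
        (∀ z : ℂ, (∃ t : ℝ, t ∈ Set.Icc (0 : ℝ) 1 ∧ ‖z - t‖ < δ) →
          q.eval z ≠ 0) →
        (∀ k : ℕ, (k : ℝ) ≤ Real.exp (c / δ) * Real.log (n * Real.exp (c / δ) / ε) →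
          p.coeff k = q.coeff k) →
        ∃ w : ℂ, Complex.exp w = p.eval 1 / q.eval 1 ∧ ‖w‖ ≤ ε := by
  refine ⟨30, by norm_num, ?_⟩
  intro δ ε n p q hδ0 hδ1 hε0 hε1 hn hpd hqd hp hq hcoeff
  set B : ℝ := Real.exp (30/δ) * Real.log (n * Real.exp (30/δ) / ε) with hB
  have hB0 : 0 ≤ B := by
    apply mul_nonneg (Real.exp_pos _).le
    apply Real.log_nonneg
    rw [le_div_iff₀ hε0]
    have h1 : (1:ℝ) ≤ n := by exact_mod_cast hn
    nlinarith [Real.one_le_exp (show (0:ℝ) ≤ 30/δ by positivity)]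
  have hco : ∀ k ≤ Nat.floor B, p.coeff k = q.coeff k := by
    intro k hk
    apply hcoeff
    calc ((k:ℝ)) ≤ (Nat.floor B : ℝ) := by exact_mod_cast hk
      _ ≤ B := Nat.floor_le hB0
  obtain ⟨w, hw1, hw2⟩ := main_est hδ0 hδ1 hn hpd hqd
    (fun z hz => hp z hz) (fun z hz => hq z hz) hco
  exact ⟨w, hw1, le_trans hw2 (numeric_final δ ε n hδ0 hδ1 hε0 hε1 hn)⟩
end

section
/- Let h₁ and h₂ be complex polynomials of degrees n₁ and n₂ respectively, let β > 1 be real, and suppose h₁(z) ≠ 0 and h₂(z) ≠ 0 whenever |z| < β. Let g(z) = h₁(z)/h₂(z), and let f be a branch of ln g on the disc {|z| < β}, i.e., f is holomorphic on {|z| < β} with e^{f(z)} = g(z) there. Let T_m(1) = f(0) + Σ_{k=1}^{m} f^{(k)}(0)/k! be the value at z = 1 of the degree-m Taylor polynomial of f at 0. Then |f(1) - T_m(1)| ≤ (n₁ + n₂)/(β^m (β - 1)(m + 1)). -/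
open Polynomial Metric Filter

private lemma aux_logderiv (z : ℂ) (c : ℂ) :
    ∀ (M : Multiset ℂ), (∀ α ∈ M, z ≠ α) →
    eval z (derivative (C c * (M.map fun α => X - C α).prod)) =
      eval z (C c * (M.map fun α => X - C α).prod) * (M.map fun α => (z - α)⁻¹).sum := by
  intro M
  induction M using Multiset.induction_on with
  | empty => intro _; simp
  | cons a M ih =>
    intro hz
    have ha : z - a ≠ 0 := sub_ne_zero.mpr (hz a (Multiset.mem_cons_self a M))
    have ih' := ih fun α hα => hz α (Multiset.mem_cons_of_mem hα)
    have key : (C c * ((a ::ₘ M).map fun α => X - C α).prod)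
        = (X - C a) * (C c * (M.map fun α => X - C α).prod) := by
      rw [Multiset.map_cons, Multiset.prod_cons]; ring
    rw [key, Multiset.map_cons, Multiset.sum_cons, derivative_mul]
    simp only [derivative_sub, derivative_X, derivative_C, sub_zero, one_mul]
    rw [eval_add, eval_mul, eval_mul, eval_sub, eval_X, eval_C, ih']
    simp only [eval_mul, eval_sub, eval_X, eval_C]
    field_simp

private lemma aux_hasDeriv (k : ℕ) (z : ℂ) :
    ∀ (M : Multiset ℂ), (∀ α ∈ M, z ≠ α) →
    HasDerivAt (fun w => (M.map fun α => ((w - α) ^ (k + 1))⁻¹).sum)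
      (-((k : ℂ) + 1) * (M.map fun α => ((z - α) ^ (k + 2))⁻¹).sum) z := by
  intro M
  induction M using Multiset.induction_on with
  | empty => intro _; simpa using hasDerivAt_const z (0 : ℂ)
  | cons a M ih =>
    intro hz
    have ha : z - a ≠ 0 := sub_ne_zero.mpr (hz a (Multiset.mem_cons_self a M))
    have h0 : HasDerivAt (fun w : ℂ => (w - a) ^ (k + 1))
        (((k : ℂ) + 1) * (z - a) ^ k) z := by
      have := ((hasDerivAt_id z).sub_const a).fun_pow (k + 1)
      simpa using this
    have h1 : HasDerivAt (fun w => ((w - a) ^ (k + 1))⁻¹)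
        (-((k : ℂ) + 1) * ((z - a) ^ (k + 2))⁻¹) z := by
      have h2 := h0.fun_inv (pow_ne_zero _ ha)
      refine h2.congr_deriv ?_
      field_simp
      ring
    have h2 := ih fun α hα => hz α (Multiset.mem_cons_of_mem hα)
    simp only [Multiset.map_cons, Multiset.sum_cons]
    refine (h1.fun_add h2).congr_deriv ?_
    ring

private lemma aux_iter (f : ℂ → ℂ) (U : Set ℂ) (hU : IsOpen U) (M₁ M₂ : Multiset ℂ)
    (hM₁ : ∀ z ∈ U, ∀ α ∈ M₁, z ≠ α) (hM₂ : ∀ z ∈ U, ∀ α ∈ M₂, z ≠ α)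
    (hd : ∀ z ∈ U, deriv f z =
      (M₁.map fun α => (z - α)⁻¹).sum - (M₂.map fun α => (z - α)⁻¹).sum) :
    ∀ n : ℕ, ∀ z ∈ U, iteratedDeriv (n + 1) f z =
      (-1 : ℂ) ^ n * (n.factorial : ℂ) *
        ((M₁.map fun α => ((z - α) ^ (n + 1))⁻¹).sum -
         (M₂.map fun α => ((z - α) ^ (n + 1))⁻¹).sum) := by
  intro n
  induction n with
  | zero =>
    intro z hz
    simp only [zero_add, iteratedDeriv_one, pow_zero, Nat.factorial_zero, Nat.cast_one,
      one_mul, pow_one]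
    exact hd z hz
  | succ n ih =>
    intro z hz
    rw [iteratedDeriv_succ]
    have hev : iteratedDeriv (n + 1) f =ᶠ[nhds z] fun w =>
        (-1 : ℂ) ^ n * (n.factorial : ℂ) *
          ((M₁.map fun α => ((w - α) ^ (n + 1))⁻¹).sum -
           (M₂.map fun α => ((w - α) ^ (n + 1))⁻¹).sum) := by
      filter_upwards [hU.mem_nhds hz] with w hw
      exact ih w hw
    rw [hev.deriv_eq]
    have h1 := aux_hasDeriv n z M₁ (hM₁ z hz)
    have h2 := aux_hasDeriv n z M₂ (hM₂ z hz)
    have h3 := (h1.sub h2).const_mul ((-1 : ℂ) ^ n * (n.factorial : ℂ))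
    have h4 : deriv (fun w =>
        (-1 : ℂ) ^ n * (n.factorial : ℂ) *
          ((M₁.map fun α => ((w - α) ^ (n + 1))⁻¹).sum -
           (M₂.map fun α => ((w - α) ^ (n + 1))⁻¹).sum)) z =
        (-1 : ℂ) ^ n * (n.factorial : ℂ) *
          (-((n : ℂ) + 1) * (M₁.map fun α => ((z - α) ^ (n + 2))⁻¹).sum -
           -((n : ℂ) + 1) * (M₂.map fun α => ((z - α) ^ (n + 2))⁻¹).sum) := h3.deriv
    rw [h4]
    push_cast [Nat.factorial_succ]
    ring

/-- Lemma 2.1: if `g = h₁/h₂` has neither zeros nor poles on the disc `{|z| < β}` with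
`β > 1`, and `f` is a holomorphic branch of `ln g` there, then the value at `1` of the
degree-`m` Taylor polynomial of `f` at `0` approximates `f(1)` within
`(n₁+n₂)/(β^m (β-1)(m+1))`. -/
theorem stmt6 (h₁ h₂ : Polynomial ℂ) (n₁ n₂ : ℕ)
    (hn₁ : h₁.natDegree = n₁) (hn₂ : h₂.natDegree = n₂)
    (β : ℝ) (hβ : 1 < β)
    (hz₁ : ∀ z : ℂ, ‖z‖ < β → h₁.eval z ≠ 0)
    (hz₂ : ∀ z : ℂ, ‖z‖ < β → h₂.eval z ≠ 0)
    (f : ℂ → ℂ) (hf : DifferentiableOn ℂ f (Metric.ball (0 : ℂ) β))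
    (hfg : ∀ z : ℂ, ‖z‖ < β → Complex.exp (f z) = h₁.eval z / h₂.eval z)
    (m : ℕ) :
    ‖f 1 - (f 0 + ∑ k ∈ Finset.Icc 1 m, iteratedDeriv k f 0 / (k.factorial : ℂ))‖
      ≤ (n₁ + n₂ : ℝ) / (β ^ m * (β - 1) * (m + 1)) := by
  have hβ0 : (0:ℝ) < β := lt_trans one_pos hβ
  have habs_ball : ∀ z : ℂ, z ∈ Metric.ball (0:ℂ) β ↔ ‖z‖ < β := by
    intro z; rw [mem_ball_zero_iff]
  have h10 : h₁ ≠ 0 := fun h => hz₁ 0 (by simpa using hβ0) (by simp [h])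
  have h20 : h₂ ≠ 0 := fun h => hz₂ 0 (by simpa using hβ0) (by simp [h])
  set M₁ := h₁.roots with hM₁def
  set M₂ := h₂.roots with hM₂def
  have hM₁card : M₁.card = n₁ := by
    rw [hM₁def, ← hn₁]
    exact Polynomial.splits_iff_card_roots.mp (IsAlgClosed.splits h₁)
  have hM₂card : M₂.card = n₂ := by
    rw [hM₂def, ← hn₂]
    exact Polynomial.splits_iff_card_roots.mp (IsAlgClosed.splits h₂)
  have hM₁abs : ∀ α ∈ M₁, β ≤ ‖α‖ := by
    intro α hα
    by_contra hc
    exact hz₁ α (not_le.mp hc) ((Polynomial.mem_roots'.mp hα).2)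
  have hM₂abs : ∀ α ∈ M₂, β ≤ ‖α‖ := by
    intro α hα
    by_contra hc
    exact hz₂ α (not_le.mp hc) ((Polynomial.mem_roots'.mp hα).2)
  have hne₁ : ∀ z ∈ Metric.ball (0:ℂ) β, ∀ α ∈ M₁, z ≠ α := by
    intro z hz α hα h
    subst h
    exact absurd ((habs_ball z).mp hz) (not_lt.mpr (hM₁abs z hα))
  have hne₂ : ∀ z ∈ Metric.ball (0:ℂ) β, ∀ α ∈ M₂, z ≠ α := by
    intro z hz α hα h
    subst h
    exact absurd ((habs_ball z).mp hz) (not_lt.mpr (hM₂abs z hα))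
  have hderiv : ∀ z ∈ Metric.ball (0:ℂ) β, deriv f z =
      (M₁.map fun α => (z - α)⁻¹).sum - (M₂.map fun α => (z - α)⁻¹).sum := by
    intro z hz
    have hzβ : ‖z‖ < β := (habs_ball z).mp hz
    have h1z : h₁.eval z ≠ 0 := hz₁ z hzβ
    have h2z : h₂.eval z ≠ 0 := hz₂ z hzβ
    have hfz : HasDerivAt f (deriv f z) z :=
      (hf.differentiableAt (Metric.isOpen_ball.mem_nhds hz)).hasDerivAt
    have hE : HasDerivAt (fun w => Complex.exp (f w) * eval w h₂)
        (Complex.exp (f z) * deriv f z * eval z h₂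
          + Complex.exp (f z) * eval z (derivative h₂)) z :=
      hfz.cexp.mul (h₂.hasDerivAt z)
    have heq : (fun w => eval w h₁) =ᶠ[nhds z] fun w => Complex.exp (f w) * eval w h₂ := by
      filter_upwards [Metric.isOpen_ball.mem_nhds hz] with w hw
      have hwβ : ‖w‖ < β := (habs_ball w).mp hw
      rw [hfg w hwβ, div_mul_cancel₀ _ (hz₂ w hwβ)]
    have hE' := hE.congr_of_eventuallyEq heq
    have hud := hE'.unique (h₁.hasDerivAt z)
    have e₁ : h₁ = C h₁.leadingCoeff * (M₁.map fun α => X - C α).prod := by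
      rw [hM₁def]
      exact (IsAlgClosed.splits h₁).eq_prod_roots
    have e₂ : h₂ = C h₂.leadingCoeff * (M₂.map fun α => X - C α).prod := by
      rw [hM₂def]
      exact (IsAlgClosed.splits h₂).eq_prod_roots
    have hd₁ : eval z (derivative h₁) = eval z h₁ * (M₁.map fun α => (z - α)⁻¹).sum := by
      conv_lhs => rw [e₁]
      conv_rhs => rw [e₁]
      exact aux_logderiv z h₁.leadingCoeff M₁ (hne₁ z hz)
    have hd₂ : eval z (derivative h₂) = eval z h₂ * (M₂.map fun α => (z - α)⁻¹).sum := by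
      conv_lhs => rw [e₂]
      conv_rhs => rw [e₂]
      exact aux_logderiv z h₂.leadingCoeff M₂ (hne₂ z hz)
    have keyb : Complex.exp (f z) * eval z h₂ = eval z h₁ := by
      rw [hfg z hzβ, div_mul_cancel₀ _ h2z]
    rw [hd₁, hd₂] at hud
    apply mul_left_cancel₀ h1z
    linear_combination hud - (deriv f z + (M₂.map fun α => (z - α)⁻¹).sum) * keyb
  have h0ball : (0:ℂ) ∈ Metric.ball (0:ℂ) β := Metric.mem_ball_self hβ0
  have hitr := aux_iter f (Metric.ball 0 β) Metric.isOpen_ball M₁ M₂ hne₁ hne₂ hderiv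
  have habsM : ∀ (M : Multiset ℂ) (k : ℕ), (∀ α ∈ M, β ≤ ‖α‖) →
      ‖(M.map fun α => (((0:ℂ) - α) ^ (k+1))⁻¹).sum‖
        ≤ (Multiset.card M : ℝ) * (β ^ (k+1))⁻¹ := by
    intro M k hM
    refine le_trans (norm_multiset_sum_le _) ?_
    rw [Multiset.map_map]
    refine le_trans (Multiset.sum_le_card_nsmul _ ((β ^ (k+1))⁻¹) ?_) ?_
    · intro x hx
      obtain ⟨α, hα, rfl⟩ := Multiset.mem_map.mp hx
      simp only [Function.comp_apply, norm_inv, norm_pow, zero_sub, norm_neg]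
      refine inv_anti₀ (by positivity) ?_
      exact pow_le_pow_left₀ (le_of_lt hβ0) (hM α hα) _
    · rw [Multiset.card_map, nsmul_eq_mul]
  have hcoef : ∀ k : ℕ, ‖iteratedDeriv (k+1) f 0 / ((k+1).factorial : ℂ)‖
      ≤ (n₁ + n₂ : ℝ) / (((k:ℝ) + 1) * β ^ (k+1)) := by
    intro k
    rw [hitr k 0 h0ball, norm_div, norm_mul, norm_mul, norm_pow]
    have e1 : ‖(-1 : ℂ)‖ = 1 := by simp
    have e2 : ‖((k.factorial : ℂ))‖ = (k.factorial : ℝ) := by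
      rw [Complex.norm_natCast]
    have e3 : ‖(((k+1).factorial : ℂ))‖ = ((k+1).factorial : ℝ) := by
      rw [Complex.norm_natCast]
    rw [e1, e2, e3, one_pow, one_mul]
    have habs12 : ‖(M₁.map fun α => (((0:ℂ) - α) ^ (k+1))⁻¹).sum
        - (M₂.map fun α => (((0:ℂ) - α) ^ (k+1))⁻¹).sum‖
        ≤ ((n₁ : ℝ) + n₂) * (β ^ (k+1))⁻¹ := by
      refine le_trans (norm_sub_le _ _) ?_
      have b1 := habsM M₁ k hM₁abs
      have b2 := habsM M₂ k hM₂abs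
      rw [hM₁card] at b1
      rw [hM₂card] at b2
      nlinarith [b1, b2]
    calc (k.factorial : ℝ) * ‖_‖ / ((k+1).factorial : ℝ)
        ≤ (k.factorial : ℝ) * (((n₁ : ℝ) + n₂) * (β ^ (k+1))⁻¹) / ((k+1).factorial : ℝ) := by
          gcongr
      _ = (n₁ + n₂ : ℝ) / (((k:ℝ) + 1) * β ^ (k+1)) := by
          rw [Nat.factorial_succ]
          have hk : (k.factorial : ℝ) ≠ 0 := by positivity
          have hβk : (β : ℝ) ^ (k+1) ≠ 0 := by positivity
          push_cast
          field_simp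
  set c : ℕ → ℂ := fun k => iteratedDeriv k f 0 / (k.factorial : ℂ) with hcdef
  have hsum : HasSum c (f 1) := by
    have h1ball : (1:ℂ) ∈ Metric.ball (0:ℂ) β := by
      rw [mem_ball_zero_iff]
      simpa using hβ
    have := Complex.hasSum_taylorSeries_on_ball hf h1ball
    simp only [sub_zero, one_pow, one_smul, smul_eq_mul] at this
    refine this.congr_fun ?_
    intro k
    simp [hcdef, div_eq_mul_inv, mul_comm]
  have hS : (∑ k ∈ Finset.range (m+1), c k)
      = f 0 + ∑ k ∈ Finset.Icc 1 m, iteratedDeriv k f 0 / (k.factorial : ℂ) := by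
    rw [Finset.sum_range_succ']
    have h0 : c 0 = f 0 := by simp [hcdef]
    rw [h0, add_comm]
    congr 1
    rw [← Finset.Ico_add_one_right_eq_Icc, Finset.sum_Ico_eq_sum_range]
    norm_num
    exact Finset.sum_congr rfl fun i _ => by rw [hcdef, add_comm]
  have htail := Summable.sum_add_tsum_nat_add (f := c) (m+1) hsum.summable
  rw [hsum.tsum_eq] at htail
  have hrem : f 1 - (f 0 + ∑ k ∈ Finset.Icc 1 m, iteratedDeriv k f 0 / (k.factorial : ℂ))
      = ∑' i, c (i + (m+1)) := by
    rw [← hS, ← htail]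
    ring
  rw [hrem]
  have hβinv : β⁻¹ < 1 := by
    rw [inv_lt_one_iff₀]
    right
    exact hβ
  have hβinv0 : (0:ℝ) ≤ β⁻¹ := by positivity
  set Cn : ℝ := (n₁ + n₂ : ℝ) / (((m:ℝ) + 1) * β ^ (m+1)) with hCndef
  have hb : ∀ i : ℕ, ‖c (i + (m+1))‖ ≤ Cn * (β⁻¹) ^ i := by
    intro i
    have h := hcoef (i + m)
    have hidx : i + (m+1) = (i+m)+1 := by omega
    rw [hidx, hcdef]
    refine le_trans h ?_
    have hpow : β ^ (i+m+1) = β ^ (m+1) * β ^ i := by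
      rw [← pow_add]
      congr 1
      omega
    have e : Cn * (β⁻¹) ^ i = ((n₁:ℝ) + n₂) / ((((m:ℝ) + 1) * β ^ (m+1)) * β ^ i) := by
      rw [hCndef]
      field_simp
      rw [one_div, inv_pow, inv_mul_cancel_right₀ (pow_ne_zero _ (ne_of_gt hβ0))]
    rw [e, hpow]
    refine div_le_div_of_nonneg_left (by positivity) (by positivity) ?_
    push_cast
    nlinarith [pow_pos hβ0 (m+1), pow_pos hβ0 i, Nat.cast_nonneg (α := ℝ) i,
        mul_nonneg (mul_nonneg (Nat.cast_nonneg (α := ℝ) i) (le_of_lt (pow_pos hβ0 (m+1))))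
          (le_of_lt (pow_pos hβ0 i))]
  have hgeo : Summable fun i : ℕ => Cn * (β⁻¹) ^ i :=
    (summable_geometric_of_lt_one hβinv0 hβinv).mul_left Cn
  have hsn : Summable fun i : ℕ => ‖c (i + (m+1))‖ :=
    Summable.of_nonneg_of_le (fun i => norm_nonneg _) hb hgeo
  calc ‖∑' i, c (i + (m+1))‖
      ≤ ∑' i, ‖c (i + (m+1))‖ := by
        exact norm_tsum_le_tsum_norm hsn
    _ ≤ ∑' i, Cn * (β⁻¹) ^ i := Summable.tsum_le_tsum hb hsn hgeo
    _ = Cn * (1 - β⁻¹)⁻¹ := by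
        rw [tsum_mul_left, tsum_geometric_of_lt_one hβinv0 hβinv]
    _ = (n₁ + n₂ : ℝ) / (β ^ m * (β - 1) * (m + 1)) := by
        rw [hCndef]
        have hβne : β ≠ 0 := ne_of_gt hβ0
        have hβ1 : β - 1 ≠ 0 := sub_ne_zero.mpr (ne_of_gt hβ)
        have hm1 : ((m:ℝ) + 1) ≠ 0 := by positivity
        have h1b : (1 - β⁻¹) = (β - 1)/β := by field_simp
        rw [h1b, pow_succ]
        field_simp
end

section
/- Let 0 < ρ < 1 be real, let ξ = 1 - √(ρ/(1+ρ)), let β = ξ^{-1}, and define ψ(z) = ρ/(1 - ξz)² - ρ. Then: (i) β ≥ 1 + √ρ; (ii) ψ(0) = 0 and ψ(1) = 1; and (iii) for every z ∈ ℂ with |z| < β, the value ψ(z) does not lie on the ray {w ∈ ℂ : Im w = 0 and Re w ≤ -3ρ/4}; that is, if ψ(z) is real then ψ(z) > -3ρ/4. -/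
/-- Lemma 2.4: for `0 < ρ < 1`, `ξ = 1 - √(ρ/(1+ρ))`, `β = ξ⁻¹` and
`ψ(z) = ρ/(1-ξz)² - ρ`, one has `β ≥ 1 + √ρ`, `ψ(0) = 0`, `ψ(1) = 1`, and the image of
the disc `{|z| < β}` under `ψ` avoids the ray `{Im w = 0, Re w ≤ -3ρ/4}`. -/
theorem stmt8 (ρ : ℝ) (hρ0 : 0 < ρ) (hρ1 : ρ < 1)
    (ξ : ℝ) (hξ : ξ = 1 - Real.sqrt (ρ / (1 + ρ)))
    (β : ℝ) (hβ : β = ξ⁻¹)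
    (ψ : ℂ → ℂ) (hψ : ∀ z : ℂ, ψ z = (ρ : ℂ) / (1 - (ξ : ℂ) * z) ^ 2 - (ρ : ℂ)) :
    1 + Real.sqrt ρ ≤ β ∧ ψ 0 = 0 ∧ ψ 1 = 1 ∧
      ∀ z : ℂ, ‖z‖ < β → (ψ z).im = 0 → -3 * ρ / 4 < (ψ z).re := by
  set s := Real.sqrt (ρ / (1 + ρ)) with hs_def
  have hρ1' : (0:ℝ) < 1 + ρ := by linarith
  have hs_sq : s ^ 2 = ρ / (1 + ρ) := Real.sq_sqrt (by positivity)
  have hs_pos : 0 < s := Real.sqrt_pos.mpr (by positivity)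
  have hs_lt1 : s < 1 := by
    have : ρ / (1 + ρ) < 1 := by rw [div_lt_one hρ1']; linarith
    nlinarith
  have hξ0 : 0 < ξ := by rw [hξ]; linarith
  have hξ1 : ξ < 1 := by rw [hξ]; linarith
  have hρs : 0 ≤ Real.sqrt ρ := Real.sqrt_nonneg ρ
  have hρsq : Real.sqrt ρ ^ 2 = ρ := Real.sq_sqrt hρ0.le
  -- part 1
  have hpart1 : 1 + Real.sqrt ρ ≤ β := by
    have key : Real.sqrt ρ / (1 + Real.sqrt ρ) ≤ s := by
      have h1 : ρ / (1 + Real.sqrt ρ) ^ 2 ≤ ρ / (1 + ρ) := by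
        apply div_le_div_of_nonneg_left hρ0.le hρ1'
        nlinarith
      calc Real.sqrt ρ / (1 + Real.sqrt ρ)
          = Real.sqrt (ρ / (1 + Real.sqrt ρ) ^ 2) := by
            rw [Real.sqrt_div hρ0.le, Real.sqrt_sq (by positivity)]
        _ ≤ s := Real.sqrt_le_sqrt h1
    have h2 : Real.sqrt ρ ≤ s * (1 + Real.sqrt ρ) :=
      (div_le_iff₀ (by positivity)).mp key
    have h3 : (1 + Real.sqrt ρ) * ξ ≤ 1 := by rw [hξ]; nlinarith
    rw [hβ]
    calc 1 + Real.sqrt ρ = ((1 + Real.sqrt ρ) * ξ) * ξ⁻¹ := by field_simp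
      _ ≤ 1 * ξ⁻¹ := by
          apply mul_le_mul_of_nonneg_right h3 (by positivity)
      _ = ξ⁻¹ := one_mul _
  refine ⟨hpart1, ?_, ?_, ?_⟩
  · rw [hψ]; simp
  · rw [hψ]
    have hξC : (1:ℂ) - (ξ:ℂ) * 1 = (s:ℂ) := by
      rw [hξ]; push_cast; ring
    rw [hξC]
    have hsC : (s:ℂ) ^ 2 = (ρ:ℂ) / ((1:ℂ) + ρ) := by
      rw [← Complex.ofReal_pow, hs_sq]; push_cast; ring
    rw [hsC]
    have h1 : (ρ:ℂ) ≠ 0 := by exact_mod_cast hρ0.ne'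
    have h2 : (1:ℂ) + ρ ≠ 0 := by
      exact_mod_cast hρ1'.ne'
    field_simp
    ring
  · intro z hz him
    set w : ℂ := 1 - (ξ:ℂ) * z with hw
    have hw1 : ‖w - 1‖ < 1 := by
      have : w - 1 = -((ξ:ℂ) * z) := by rw [hw]; ring
      rw [this, norm_neg, norm_mul, Complex.norm_real, Real.norm_eq_abs,
        abs_of_pos hξ0]
      calc ξ * ‖z‖ < ξ * β := by
            exact mul_lt_mul_of_pos_left hz hξ0
        _ = 1 := by rw [hβ]; field_simp
    have hre : |w.re - 1| < 1 := by
      have := Complex.abs_re_le_norm (w - 1)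
      simpa using this.trans_lt hw1
    rw [abs_lt] at hre
    have hre0 : 0 < w.re := by linarith
    have hre2 : w.re < 2 := by linarith
    have hwne : w ≠ 0 := by
      intro h; rw [h] at hre0; simp at hre0
    -- ψ z imaginary part
    have him' : ((ρ:ℂ) / w ^ 2).im = 0 := by
      rw [hψ, ← hw] at him
      simpa [Complex.sub_im] using him
    have hnsq : Complex.normSq (w ^ 2) ≠ 0 := by
      simpa [Complex.normSq_eq_zero] using pow_ne_zero 2 hwne
    have hw2im : (w ^ 2).im = 0 := by
      rw [Complex.div_im, Complex.ofReal_im, Complex.ofReal_re] at him'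
      simp only [zero_mul, zero_div, zero_sub, neg_eq_zero] at him'
      rcases div_eq_zero_iff.mp him' with h | h
      · exact (mul_eq_zero.mp h).resolve_left (by exact_mod_cast hρ0.ne')
      · exact absurd h hnsq
    have hwim : w.im = 0 := by
      have : (w ^ 2).im = 2 * w.re * w.im := by
        rw [sq, Complex.mul_im]; ring
      rw [this] at hw2im
      have := mul_eq_zero.mp hw2im
      rcases this with h | h
      · exact absurd h (by positivity : (0:ℝ) < 2 * w.re).ne'
      · exact h
    have hwre : w = ((w.re : ℝ) : ℂ) := Complex.ext rfl (by simp [hwim])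
    obtain ⟨a, ha⟩ : ∃ a : ℝ, w = (a : ℂ) := ⟨w.re, hwre⟩
    have ha' : w.re = a := by rw [ha]; simp
    rw [ha'] at hre0 hre2
    have hval : ψ z = ((ρ / a ^ 2 - ρ : ℝ) : ℂ) := by
      rw [hψ, ← hw, ha]; push_cast; ring
    rw [hval, Complex.ofReal_re]
    have h4 : a ^ 2 < 4 := by nlinarith
    have h5 : ρ / 4 < ρ / a ^ 2 :=
      div_lt_div_of_pos_left hρ0 (by positivity) h4
    linarith
end

section
/- Let 0 < δ < 1, set ρ = 4δ/3, ξ = 1 - √(ρ/(1+ρ)), β = ξ^{-1}, and ψ(z) = ρ/(1 - ξz)² - ρ. Let p be a nonzero real polynomial all of whose complex roots x are real and satisfy x ≤ -δ. Then the composition g(z) = p(ψ(z)) satisfies g(z) ≠ 0 for every z ∈ ℂ with |z| < β, g(0) = p(0), and g(1) = p(1). -/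
/-- Section 2.5: with `ρ = 4δ/3`, `ξ = 1 - √(ρ/(1+ρ))`, `β = ξ⁻¹` and
`ψ(z) = ρ/(1-ξz)² - ρ`, if `p` is a nonzero real polynomial all of whose complex roots are
real and `≤ -δ`, then `g(z) = p(ψ(z))` is nonvanishing on the disc `{|z| < β}` and
satisfies `g(0) = p(0)`, `g(1) = p(1)`. -/
theorem stmt12 (δ : ℝ) (hδ0 : 0 < δ) (hδ1 : δ < 1)
    (ρ : ℝ) (hρ : ρ = 4 * δ / 3)
    (ξ : ℝ) (hξ : ξ = 1 - Real.sqrt (ρ / (1 + ρ)))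
    (β : ℝ) (hβ : β = ξ⁻¹)
    (ψ : ℂ → ℂ) (hψ : ∀ z : ℂ, ψ z = (ρ : ℂ) / (1 - (ξ : ℂ) * z) ^ 2 - (ρ : ℂ))
    (p : Polynomial ℝ) (hp : p ≠ 0)
    (hroots : ∀ z : ℂ, Polynomial.aeval z p = 0 → z.im = 0 ∧ z.re ≤ -δ)
    (g : ℂ → ℂ) (hg : ∀ z : ℂ, g z = Polynomial.aeval (ψ z) p) :
    (∀ z : ℂ, ‖z‖ < β → g z ≠ 0) ∧
      g 0 = Complex.ofReal (p.eval 0) ∧ g 1 = Complex.ofReal (p.eval 1) := by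
  have hρ0 : 0 < ρ := by rw [hρ]; linarith
  have hfrac0 : 0 ≤ ρ / (1 + ρ) := by positivity
  have hfrac1 : ρ / (1 + ρ) < 1 := by rw [div_lt_one (by linarith)]; linarith
  have hs0 : 0 ≤ Real.sqrt (ρ / (1 + ρ)) := Real.sqrt_nonneg _
  have hs1 : Real.sqrt (ρ / (1 + ρ)) < 1 := by
    have := Real.sqrt_lt_sqrt hfrac0 hfrac1
    simpa using this
  have hξ0 : 0 < ξ := by rw [hξ]; linarith
  have hξ1 : ξ ≤ 1 := by rw [hξ]; linarith
  have hξβ : ξ * β = 1 := by rw [hβ, mul_inv_cancel₀ (ne_of_gt hξ0)]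
  refine ⟨?_, ?_, ?_⟩
  · intro z hz hgz
    rw [hg] at hgz
    obtain ⟨him, hre⟩ := hroots _ hgz
    set w := (ψ z).re with hwdef
    have hw : ψ z = (w : ℂ) := Complex.ext rfl (by simpa using him)
    set u : ℂ := 1 - (ξ : ℂ) * z with hu
    have hzabs : ξ * ‖z‖ < 1 := by
      calc ξ * ‖z‖ < ξ * β := by
            exact mul_lt_mul_of_pos_left hz hξ0
        _ = 1 := hξβ
    have huabs : ‖(ξ : ℂ) * z‖ = ξ * ‖z‖ := by
      rw [norm_mul, Complex.norm_of_nonneg hξ0.le]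
    have hune : u ≠ 0 := by
      intro h
      have : (ξ : ℂ) * z = 1 := by rw [hu] at h; linear_combination -h
      have := congrArg (‖·‖) this
      rw [huabs] at this
      simp at this
      linarith
    have hulim : ‖u‖ < 2 := by
      have := norm_sub_le (1:ℂ) ((ξ:ℂ)*z)
      rw [hu]
      have h1 : ‖(1:ℂ)‖ = 1 := by simp
      rw [h1, huabs] at this
      calc ‖1 - (ξ:ℂ)*z‖ ≤ 1 + ξ * ‖z‖ := this
        _ < 2 := by linarith
    have heq : ((ρ : ℝ) : ℂ) = ((w + ρ : ℝ) : ℂ) * u ^ 2 := by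
      have h1 : (w : ℂ) = (ρ : ℂ) / u ^ 2 - ρ := by rw [← hw, hψ z]
      have hu2 : u ^ 2 ≠ 0 := pow_ne_zero _ hune
      push_cast
      rw [h1, sub_add_cancel, div_mul_cancel₀ _ hu2]
    have hwρ : w + ρ ≠ 0 := by
      intro h
      rw [h] at heq
      simp at heq
      exact absurd heq (ne_of_gt hρ0)
    rcases lt_or_gt_of_ne hwρ with hneg | hpos
    · -- w + ρ < 0
      have h1 := congrArg Complex.re heq
      have h2 := congrArg Complex.im heq
      simp [Complex.mul_re, Complex.mul_im, pow_two] at h1 h2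
      -- h2 : 0 = (w+ρ) * (u.re*u.im + u.im*u.re)
      have hab : u.re * u.im = 0 := by
        rcases h2 with h | h
        · exact absurd h hwρ
        · linarith
      rcases mul_eq_zero.mp hab with ha | hb
      · -- u.re = 0, but u.re = 1 - ξ * z.re
        have : u.re = 1 - ξ * z.re := by simp [hu]
        rw [ha] at this
        have h3 : ξ * z.re = 1 := by linarith
        have h4 : |z.re| ≤ ‖z‖ := Complex.abs_re_le_norm z
        nlinarith [abs_nonneg z.re, le_abs_self z.re]
      · rw [hb] at h1
        nlinarith [sq_nonneg u.re]
    · -- w + ρ > 0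
      have habs := congrArg (‖·‖) heq
      rw [norm_mul, norm_pow, Complex.norm_of_nonneg hρ0.le,
        Complex.norm_of_nonneg hpos.le] at habs
      have h4 : (0:ℝ) < 4 - ‖u‖ ^ 2 := by nlinarith [norm_nonneg u]
      nlinarith [mul_pos hpos h4]
  · rw [hg]
    have h0 : ψ 0 = 0 := by rw [hψ]; simp
    rw [h0]
    have := Polynomial.aeval_algebraMap_apply_eq_algebraMap_eval (A := ℂ) (0 : ℝ) p
    simpa using this
  · rw [hg]
    have h1 : ψ 1 = 1 := by
      rw [hψ]
      have : (1 : ℂ) - (ξ : ℂ) * 1 = ((Real.sqrt (ρ / (1+ρ)) : ℝ) : ℂ) := by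
        rw [hξ]; push_cast; ring
      rw [this]
      rw [← Complex.ofReal_pow, Real.sq_sqrt hfrac0]
      rw [show ((ρ / (1+ρ) : ℝ) : ℂ) = (ρ:ℂ) / ((1:ℂ)+ρ) by push_cast; ring]
      have hρne : (ρ:ℂ) ≠ 0 := Complex.ofReal_ne_zero.mpr (ne_of_gt hρ0)
      have h1ρne : (1:ℂ) + ρ ≠ 0 := by
        rw [show (1:ℂ)+ρ = ((1+ρ:ℝ):ℂ) by push_cast; ring]
        exact Complex.ofReal_ne_zero.mpr (by positivity)
      field_simp
      ring
    rw [h1]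
    have := Polynomial.aeval_algebraMap_apply_eq_algebraMap_eval (A := ℂ) (1 : ℝ) p
    simpa using this
end
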